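/- arXiv:1701.04092 — 4 statements merged into one kernel-verified Lean document; each statement's English description precedes it below -/
import Mathlib

section
/- Let q be an odd prime power, P ∈ 𝔽_q[T] monic irreducible, ν ≥ 1, and f ∈ 𝔽_q[T] with f ≢ 0 mod P^ν. Write f = P^α·g with α = v_P(f) (so 0 ≤ α < ν and P ∤ g). Then: (1) if χ_q(P) = −1, the class of f lies in 𝒜_q(P^ν) if and only if α is even; (2) if χ_q(P) = 0 (i.e. P = T), the class of f lies in 𝒜_q(P^ν) if and only if χ_q(g) = 1, i.e. g(0) is a nonzero square in 𝔽_q; (3) if χ_q(P) = 1, the class of f always lies in 𝒜_q(P^ν). -/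
open Polynomial Filter

open scoped Classical

noncomputable section

variable (F : Type*) [Field F] [Fintype F]

/-- `f` is a sum of two squares in the function-field sense: `f = A² + T·B²`. -/
def IsSOS (f : F[X]) : Prop := ∃ A B : F[X], f = A ^ 2 + X * B ^ 2

/-- The indicator function `b_q` of sums of two squares. -/
def bq (f : F[X]) : ℝ := if IsSOS F f then 1 else 0

/-- `r_q(f)`: the number of representations `f = A² + T·B²`, counted up to sign. -/
def rq (f : F[X]) : ℝ :=
  (Nat.card {p : F[X] × F[X] // f = p.1 ^ 2 + X * p.2 ^ 2} : ℝ) / 2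

/-- Indicator of monic irreducible (prime) polynomials. -/
def primeInd (f : F[X]) : ℝ := if f.Monic ∧ Irreducible f then 1 else 0

/-- The `r`-divisor function: number of ordered factorizations into `r` monic factors. -/
def dr (r : ℕ) (f : F[X]) : ℝ :=
  (Nat.card {g : Fin r → F[X] // (∀ i, (g i).Monic) ∧ ∏ i, g i = f} : ℝ)

/-- The quadratic character modulo `T`. -/
def chiq (f : F[X]) : ℝ :=
  if f.eval 0 = 0 then 0 else if IsSquare (f.eval 0) then 1 else -1

/-- The norm `|P| = q^{deg P}`. -/
def absP (P : F[X]) : ℝ := (Fintype.card F : ℝ) ^ P.natDegree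

/-- `𝒜_q(g) = {A² + T·B² mod g}` inside `𝔽_q[T]/(g)`. -/
def Aset (g : F[X]) : Set (F[X] ⧸ Ideal.span {g}) :=
  {x | ∃ A B : F[X], x = Ideal.Quotient.mk (Ideal.span {g}) (A ^ 2 + X * B ^ 2)}

/-- `𝒜_{q,h}(g) = {f : f + hᵢ ∈ 𝒜_q(g) for all i}`. -/
def Ahset {k : ℕ} (h : Fin k → F[X]) (g : F[X]) : Set (F[X] ⧸ Ideal.span {g}) :=
  {x | ∀ i, x + Ideal.Quotient.mk (Ideal.span {g}) (h i) ∈ Aset F g}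

/-- `Ω_{q,h}(g)`: elements of `𝒜_{q,h}(g)` with `f + hᵢ ≡ 0` for some `i`. -/
def OmegaSet {k : ℕ} (h : Fin k → F[X]) (g : F[X]) : Set (F[X] ⧸ Ideal.span {g}) :=
  {x ∈ Ahset F h g | ∃ i, x + Ideal.Quotient.mk (Ideal.span {g}) (h i) = 0}

/-- `Ω*_{q,h}(g)`: elements of `𝒜_{q,h}(g)` with `f + hᵢ ≢ 0` for all `i`. -/
def OmegaStar {k : ℕ} (h : Fin k → F[X]) (g : F[X]) : Set (F[X] ⧸ Ideal.span {g}) :=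
  {x ∈ Ahset F h g | ∀ i, x + Ideal.Quotient.mk (Ideal.span {g}) (h i) ≠ 0}

/-- `δ_{q,h}(P) = lim_ν |P|^{-ν} #𝒜_{q,h}(P^ν)`; since the sequence is monotonically
decreasing and nonnegative, the limit equals the infimum. -/
def deltaP {k : ℕ} (h : Fin k → F[X]) (P : F[X]) : ℝ :=
  ⨅ ν : ℕ, (Nat.card ↥(Ahset F h (P ^ ν)) : ℝ) / absP F P ^ ν

/-- The singular series `𝔖_{q,h} = ∏_P δ_{q,h}(P)/δ_{q,0}(P)^k`. -/
def singSeries {k : ℕ} (h : Fin k → F[X]) : ℝ :=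
  ∏' P : {P : F[X] // P.Monic ∧ Irreducible P},
    deltaP F h P.1 / deltaP F (fun _ : Fin 1 => (0 : F[X])) P.1 ^ k

/-- `𝔖_h = 2^{k − #{h₁(0),…,h_k(0)}}`. -/
def Sfrak {k : ℕ} (h : Fin k → F[X]) : ℝ :=
  2 ^ (k - Set.ncard (Set.range fun i => (h i).eval 0))

/-- `𝔇_h = 1` iff every value `a ∈ 𝔽_q` is attained by an even number of the `hᵢ(0)`. -/
def Dfrak {k : ℕ} (h : Fin k → F[X]) : ℝ :=
  if ∀ a : F, Even (Nat.card {i : Fin k // (h i).eval 0 = a}) then 1 else 0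

/-- The average of `ψ` over all monic polynomials of degree `n`
(parametrized by their lower `n` coefficients). -/
def monicAvg (n : ℕ) (ψ : F[X] → ℝ) : ℝ :=
  (∑ a : Fin n → F, ψ (X ^ n + ∑ i : Fin n, C (a i) * X ^ (i : ℕ))) /
    (Fintype.card F : ℝ) ^ n

/-- The average of `ψ` over the short interval `{f : deg(f - f₀) < m}` around `f₀`,
parametrized by the `m` free lowest coefficients. -/
def intervalAvg (f0 : F[X]) (m : ℕ) (ψ : F[X] → ℝ) : ℝ :=
  (∑ a : Fin m → F, ψ (f0 + ∑ i : Fin m, C (a i) * X ^ (i : ℕ))) /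
    (Fintype.card F : ℝ) ^ m

end
section AuxLemmas

open Polynomial

variable {F : Type} [Field F] [Fintype F]



lemma aux_char_ne_two (hF : Odd (Fintype.card F)) : ringChar F ≠ 2 := by
  intro h
  have := FiniteField.even_card_of_char_two h
  rw [Nat.odd_iff] at hF; omega

lemma aux_two_ne_zero (hF : Odd (Fintype.card F)) : (2:F) ≠ 0 :=
  Ring.two_ne_zero (aux_char_ne_two hF)

/-- Hensel lifting of square roots mod powers of an irreducible `P`. -/
lemma aux_hensel (hF : Odd (Fintype.card F)) {P : F[X]} (hPi : Irreducible P)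
    {u s₀ : F[X]} (hu : ¬ P ∣ u) (h0 : P ∣ u - s₀^2) :
    ∀ ν : ℕ, ∃ s : F[X], P ^ ν ∣ u - s^2 := by
  have hP2 : ¬ P ∣ (2 : F[X]) := by
    intro h
    exact hPi.not_isUnit (isUnit_of_dvd_unit h (by
      have h2 : IsUnit (C (2:F)) := isUnit_C.mpr ((aux_two_ne_zero hF).isUnit)
      rwa [map_ofNat C 2] at h2))
  -- strengthened statement: we can take `s` with `P ∤ s`
  have key : ∀ ν : ℕ, ∃ s : F[X], P ^ (ν+1) ∣ u - s^2 ∧ ¬ P ∣ s := by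
    have hs₀ : ¬ P ∣ s₀ := by
      intro h
      apply hu
      have h2 : P ∣ s₀ ^ 2 := h.trans (dvd_pow_self s₀ two_ne_zero)
      have := dvd_add h0 h2
      simpa using this
    intro ν
    induction ν with
    | zero => exact ⟨s₀, by simpa using h0, hs₀⟩
    | succ ν ih =>
      obtain ⟨s, hdvd, hs⟩ := ih
      obtain ⟨w, hw⟩ := hdvd
      have h2s : ¬ P ∣ 2 * s := by
        intro h
        rcases (hPi.prime.dvd_mul).mp h with h | h
        · exact hP2 h
        · exact hs h
      obtain ⟨a, b, hab⟩ := (hPi.coprime_iff_not_dvd.mpr h2s : IsCoprime P (2*s))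
      refine ⟨s + P^(ν+1) * (b * w), ?_, ?_⟩
      · have expand : u - (s + P^(ν+1) * (b*w))^2
            = P^(ν+1) * (w - 2*s*(b*w)) - (P^(ν+1))^2 * (b*w)^2 := by
          have hw' : u = s^2 + P^(ν+1)*w := by linear_combination hw
          rw [hw']; ring
        rw [expand]
        have h1 : P^(ν+2) ∣ P^(ν+1) * (w - 2*s*(b*w)) := by
          have : w - 2*s*(b*w) = (a*w) * P := by
            have : a * P = 1 - b * (2*s) := by linear_combination hab
            rw [show (a*w) * P = (a * P) * w by ring, this]; ring
          rw [this, pow_succ]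
          exact mul_dvd_mul (dvd_refl _) (dvd_mul_left _ _)
        have h2 : P^(ν+2) ∣ (P^(ν+1))^2 * (b*w)^2 := by
          apply dvd_mul_of_dvd_left
          rw [← pow_mul]
          exact pow_dvd_pow P (by omega)
        exact dvd_sub h1 h2
      · intro h
        apply hs
        have : P ∣ P^(ν+1) * (b*w) := dvd_mul_of_dvd_left (dvd_pow_self P (by omega)) _
        have := dvd_sub h this
        simpa using this
  intro ν
  match ν with
  | 0 => exact ⟨s₀, by simp⟩
  | (ν+1) => exact ⟨(key ν).choose, (key ν).choose_spec.1⟩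



lemma aux_isSquare_neg_root_iff (hF : Odd (Fintype.card F)) {P : F[X]} (hPm : P.Monic)
    (hPi : Irreducible P) (h0 : P.eval 0 ≠ 0) :
    IsSquare (-(AdjoinRoot.root P)) ↔ IsSquare (P.eval 0) := by
  haveI : Fact (Irreducible P) := ⟨hPi⟩
  set q := Fintype.card F with hq
  set d := P.natDegree with hd
  set K := AdjoinRoot P with hK
  set t : K := AdjoinRoot.root P with ht
  haveI instK : Fintype K := Module.fintypeOfFintype (AdjoinRoot.powerBasis' hPm).basis
  have hcard : Fintype.card K = q ^ d := by
    rw [Module.card_fintype (AdjoinRoot.powerBasis' hPm).basis]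
    congr 1
    simp [AdjoinRoot.powerBasis']
    exact Fintype.card_fin _
  have hd1 : 0 < d := hPi.natDegree_pos
  have hq2 : 1 < q := Fintype.one_lt_card
  have hcardKodd : Odd (Fintype.card K) := by rw [hcard]; exact hF.pow
  -- characteristic facts
  obtain ⟨n, hp, hcardF⟩ := FiniteField.card F (ringChar F)
  set p := ringChar F with hpdef
  haveI : Fact p.Prime := ⟨hp⟩
  haveI : CharP K p := charP_of_injective_algebraMap (algebraMap F K).injective p
  haveI : ExpChar K p := .prime hp
  -- frobenius powers commute with evaluation of mapped polynomials
  have hcomm : ∀ (m : ℕ) (a : F[X]) (x : K),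
      ((a.map (algebraMap F K)).eval x) ^ q ^ m = (a.map (algebraMap F K)).eval (x ^ q ^ m) := by
    intro m a x
    have hqm : (q:ℕ) ^ m = p ^ (n * m) := by rw [hq, hcardF, ← pow_mul]
    set σ : K →+* K := iterateFrobenius K p (n*m) with hσdef
    have hσ : ∀ y : K, σ y = y ^ q ^ m := fun y => by
      rw [hσdef, iterateFrobenius_def, ← hqm]
    have hcompeq : σ.comp (algebraMap F K) = algebraMap F K := by
      ext c
      simp only [RingHom.comp_apply, hσ, ← map_pow]
      congr 1
      rw [hq]
      exact FiniteField.pow_card_pow _ _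
    set Q : K[X] := a.map (algebraMap F K) with hQ
    have hmap : Q.map σ = Q := by rw [hQ, Polynomial.map_map, hcompeq]
    calc (Q.eval x) ^ q ^ m = σ (Q.eval x) := (hσ _).symm
      _ = eval₂ σ (σ x) Q := (Polynomial.eval₂_at_apply σ x).symm
      _ = (Q.map σ).eval (σ x) := Polynomial.eval₂_eq_eval_map σ
      _ = Q.eval (x ^ q ^ m) := by rw [hmap, hσ]
  have hroot : (P.map (algebraMap F K)).eval t = 0 := by
    rw [Polynomial.eval_map, ← Polynomial.aeval_def, AdjoinRoot.aeval_eq, AdjoinRoot.mk_self]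
  have hroots : ∀ m : ℕ, (P.map (algebraMap F K)).eval (t ^ q ^ m) = 0 := by
    intro m
    rw [← hcomm m P t, hroot, zero_pow]
    positivity
  have hPmap0 : (P.map (algebraMap F K)) ≠ 0 := (hPm.map (algebraMap F K)).ne_zero
  have ht0 : t ≠ 0 := by
    intro h
    apply h0
    have h2 : (P.map (algebraMap F K)).eval 0 = 0 := h ▸ hroot
    rw [Polynomial.eval_zero_map] at h2
    exact (_root_.map_eq_zero (algebraMap F K)).mp h2
  -- injectivity of i ↦ t^(q^i) on range d
  have hpowd : t ^ q ^ d = t := by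
    rw [← hcard]; exact FiniteField.pow_card t
  have hnot : ∀ m : ℕ, 0 < m → m < d → t ^ q ^ m ≠ t := by
    intro m hm1 hmd heq
    have hall : ∀ x : K, x ^ q ^ m = x := by
      intro x
      obtain ⟨a, rfl⟩ := AdjoinRoot.mk_surjective (g := P) x
      rw [← AdjoinRoot.aeval_eq, Polynomial.aeval_def, Polynomial.eval₂_eq_eval_map]
      rw [show AdjoinRoot.root P = t from rfl, hcomm m a t, heq]
    set W : K[X] := X ^ (q ^ m) - X with hW
    have hlt : (X : K[X]).degree < (X ^ (q^m) : K[X]).degree := by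
      rw [Polynomial.degree_X_pow, Polynomial.degree_X]
      exact_mod_cast Nat.one_lt_pow (by omega) hq2
    have hdegW : W.degree = (q ^ m : ℕ) := by
      rw [hW, Polynomial.degree_sub_eq_left_of_degree_lt hlt, Polynomial.degree_X_pow]
    have hW0 : W ≠ 0 := by
      apply Polynomial.zero_le_degree_iff.mp
      rw [hdegW]
      exact_mod_cast Nat.zero_le _
    have hsub : (Finset.univ : Finset K) ⊆ W.roots.toFinset := by
      intro x _
      rw [Multiset.mem_toFinset, Polynomial.mem_roots']
      exact ⟨hW0, by rw [Polynomial.IsRoot, hW]; simp [hall x]⟩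
    have hle : Fintype.card K ≤ q ^ m := by
      calc Fintype.card K = (Finset.univ : Finset K).card := rfl
        _ ≤ W.roots.toFinset.card := Finset.card_le_card hsub
        _ ≤ Multiset.card W.roots := Multiset.toFinset_card_le _
        _ ≤ W.natDegree := W.card_roots'
        _ = q ^ m := Polynomial.natDegree_eq_of_degree_eq_some hdegW
    rw [hcard] at hle
    exact absurd hle (not_le.mpr (pow_lt_pow_right₀ hq2 hmd))
  have hinj : ∀ i < d, ∀ j < d, t ^ q ^ i = t ^ q ^ j → i = j := by
    have key : ∀ i j, i < d → j < d → i < j → t ^ q ^ i ≠ t ^ q ^ j := by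
      intro i j hid hjd hij heq
      have h1 : (t ^ q ^ i) ^ q ^ (d - j) = (t ^ q ^ j) ^ q ^ (d - j) := by rw [heq]
      rw [← pow_mul, ← pow_mul, ← pow_add, ← pow_add] at h1
      have hjd' : j + (d - j) = d := by omega
      rw [hjd', hpowd] at h1
      exact hnot (i + (d - j)) (by omega) (by omega) h1
    intro i hid j hjd heq
    rcases lt_trichotomy i j with h | h | h
    · exact absurd heq (key i j hid hjd h)
    · exact h
    · exact absurd heq.symm (key j i hjd hid h)
  -- the factorization  P.map = ∏ (X - C (t^(q^i)))  and its value at 0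
  set s : ℕ := ∑ i ∈ Finset.range d, q ^ i with hs
  have hfact : algebraMap F K (P.eval 0) = (-1)^d * t ^ s := by
    set Tfin : Finset K := (Finset.range d).image (fun i => t ^ q ^ i) with hT
    have hinj' : ∀ i ∈ Finset.range d, ∀ j ∈ Finset.range d,
        t ^ q ^ i = t ^ q ^ j → i = j := by
      intro i hi j hj hij
      exact hinj i (Finset.mem_range.mp hi) j (Finset.mem_range.mp hj) hij
    have hTcard : Tfin.card = d := by
      rw [hT, Finset.card_image_of_injOn (fun i hi j hj hij => hinj' i hi j hj hij),
        Finset.card_range]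
    set Q1 : K[X] := ∏ r ∈ Tfin, (X - C r) with hQ1
    have hQ1monic : Q1.Monic := monic_prod_of_monic _ _ (fun r _ => monic_X_sub_C r)
    have hQ1deg : Q1.natDegree = d := by
      rw [hQ1, Polynomial.natDegree_prod_of_monic _ _ (fun r _ => monic_X_sub_C r)]
      simp [Polynomial.natDegree_X_sub_C, hTcard]
    have hdvd : Q1 ∣ P.map (algebraMap F K) := by
      have hsubT : Tfin.val ≤ (P.map (algebraMap F K)).roots := by
        rw [Multiset.le_iff_subset Tfin.nodup]
        intro r hr
        have hr' : r ∈ Tfin := Finset.mem_def.mpr hr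
        obtain ⟨i, hi, rfl⟩ := Finset.mem_image.mp hr'
        rw [Polynomial.mem_roots']
        exact ⟨hPmap0, hroots i⟩
      calc Q1 = (Tfin.val.map (fun r => X - C r)).prod := rfl
        _ ∣ ((P.map (algebraMap F K)).roots.map (fun r => X - C r)).prod :=
            Multiset.prod_dvd_prod_of_le (Multiset.map_le_map hsubT)
        _ ∣ P.map (algebraMap F K) := Polynomial.prod_multiset_X_sub_C_dvd _
    have heqQ : P.map (algebraMap F K) = Q1 := by
      obtain ⟨c, hc⟩ := hdvd
      have hc0 : c ≠ 0 := by
        intro h; rw [h, mul_zero] at hc; exact hPmap0 hc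
      have hdeg : (P.map (algebraMap F K)).natDegree = d := hPm.natDegree_map _
      have hcdeg : c.natDegree = 0 := by
        have h2 := Polynomial.natDegree_mul (hQ1monic.ne_zero) hc0
        rw [← hc, hdeg, hQ1deg] at h2; omega
      have hlc : c.leadingCoeff = 1 := by
        have h1 : (P.map (algebraMap F K)).leadingCoeff = 1 := (hPm.map _)
        rw [hc, Polynomial.leadingCoeff_mul, hQ1monic.leadingCoeff, one_mul] at h1
        exact h1
      have hc1 : c = 1 := by
        have h01 : c.coeff 0 = 1 := by
          rw [show (0:ℕ) = c.natDegree from hcdeg.symm]; exact hlc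
        rw [Polynomial.eq_C_of_natDegree_le_zero (le_of_eq hcdeg), h01, map_one]
      rw [hc, hc1, mul_one]
    have heval : algebraMap F K (P.eval 0) = ∏ i ∈ Finset.range d, (0 - t ^ q ^ i) := by
      rw [← Polynomial.eval_zero_map, heqQ, hQ1, hT, Polynomial.eval_prod,
        Finset.prod_image hinj']
      simp
    rw [heval]
    simp only [zero_sub]
    have hcongr : ∀ i ∈ Finset.range d, -t ^ q ^ i = (-1) * t ^ q ^ i :=
      fun i _ => by ring
    rw [Finset.prod_congr rfl hcongr, Finset.prod_mul_distrib, Finset.prod_const,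
      Finset.card_range, Finset.prod_pow_eq_pow_sum]
  -- arithmetic of exponents
  have hqodd : q % 2 = 1 := Nat.odd_iff.mp hF
  have hnat : (q - 1) * s + 1 = q ^ d := by
    have h1 : ((q:ℤ) - 1) * (∑ i ∈ Finset.range d, (q:ℤ)^i) = (q:ℤ)^d - 1 := by
      linear_combination geom_sum_mul (q:ℤ) d
    have h2 : ((s:ℤ)) = ∑ i ∈ Finset.range d, (q:ℤ)^i := by
      rw [hs]; push_cast; rfl
    have hq1 : 1 ≤ q := by omega
    zify [hq1]
    rw [h2]
    linarith [h1]
  have hqd : 2 * (s * ((q-1)/2)) + 1 = q ^ d := by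
    have he : 2 * ((q-1)/2) = q - 1 := by omega
    calc 2 * (s * ((q-1)/2)) + 1 = s * (2 * ((q-1)/2)) + 1 := by ring
      _ = s * (q-1) + 1 := by rw [he]
      _ = (q-1) * s + 1 := by ring
      _ = q ^ d := hnat
  have hcardK2 : Fintype.card K / 2 = s * ((q-1)/2) := by
    rw [hcard, ← hqd]
    omega
  have hcardF2 : Fintype.card F / 2 = (q-1)/2 := by
    rw [← hq]; omega
  -- parity of s and d
  have hspar : s % 2 = d % 2 := by
    rw [hs]
    have : ∀ e : ℕ, (∑ i ∈ Finset.range e, q ^ i) % 2 = e % 2 := by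
      intro e
      induction e with
      | zero => simp
      | succ e ih =>
        rw [Finset.sum_range_succ]
        have : q ^ e % 2 = 1 := Nat.odd_iff.mp (hF.pow)
        omega
    exact this d
  have hK2 : ringChar K ≠ 2 := by
    intro h
    have h2 := FiniteField.even_card_of_char_two h
    rw [Nat.odd_iff] at hcardKodd; omega
  have hF2 : ringChar F ≠ 2 := aux_char_ne_two hF
  have hnt : -t ≠ 0 := neg_ne_zero.mpr ht0
  rw [FiniteField.isSquare_iff hK2 hnt, FiniteField.isSquare_iff hF2 h0,
    hcardK2, hcardF2]
  have hsign : ((-1 : K))^s = (-1:K)^d := by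
    rcases Nat.even_or_odd d with hde | hdo
    · have hse : Even s := by rw [Nat.even_iff] at *; omega
      rw [hse.neg_one_pow, hde.neg_one_pow]
    · have hso : Odd s := by rw [Nat.odd_iff] at *; omega
      rw [hso.neg_one_pow, hdo.neg_one_pow]
  have hstep : (-t) ^ s = algebraMap F K (P.eval 0) := by
    rw [neg_pow, hsign, hfact]
  have hfinal : (-t) ^ (s * ((q-1)/2)) = algebraMap F K ((P.eval 0) ^ ((q-1)/2)) := by
    rw [pow_mul, hstep, ← map_pow]
  rw [hfinal]
  constructor
  · intro h
    apply (algebraMap F K).injective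
    rw [h, map_one]
  · intro h
    rw [h, map_one]
lemma aux_not_dvd_X {P : F[X]} (hPi : Irreducible P) (h0 : P.eval 0 ≠ 0) :
    ¬ P ∣ (X : F[X]) := by
  intro hdvd
  obtain ⟨c, hc⟩ := hdvd
  have hc0 : c ≠ 0 := by
    intro h; rw [h, mul_zero] at hc; exact X_ne_zero hc
  have hP0 : P ≠ 0 := hPi.ne_zero
  have hdeg : 1 = P.natDegree + c.natDegree := by
    have := Polynomial.natDegree_mul hP0 hc0
    rw [← hc, Polynomial.natDegree_X] at this
    exact this
  have hPd : 0 < P.natDegree := hPi.natDegree_pos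
  have hcd : c.natDegree = 0 := by omega
  have hceq : c = C (c.coeff 0) := Polynomial.eq_C_of_natDegree_le_zero (le_of_eq hcd)
  apply h0
  have := congrArg (Polynomial.eval 0) hc
  rw [Polynomial.eval_X, Polynomial.eval_mul, hceq, Polynomial.eval_C] at this
  have hcc : c.coeff 0 ≠ 0 := by
    intro h; rw [h, map_zero] at hceq; exact hc0 hceq
  field_simp at this
  exact (mul_eq_zero.mp this.symm).resolve_right hcc

lemma aux_univ {P : F[X]} (hF : Odd (Fintype.card F)) (hPm : P.Monic)
    (hPi : Irreducible P) (h0 : P.eval 0 ≠ 0) (g : F[X]) :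
    ∃ a b : F[X], P ∣ g - (a^2 + X*b^2) := by
  haveI : Fact (Irreducible P) := ⟨hPi⟩
  set K := AdjoinRoot P with hK
  set t : K := AdjoinRoot.root P with ht
  haveI instK : Fintype K := Module.fintypeOfFintype (AdjoinRoot.powerBasis' hPm).basis
  have hcard : Fintype.card K = Fintype.card F ^ P.natDegree := by
    rw [Module.card_fintype (AdjoinRoot.powerBasis' hPm).basis]
    congr 1
    simp [AdjoinRoot.powerBasis']
    exact Fintype.card_fin _
  have hcardKodd : Fintype.card K % 2 = 1 := by
    rw [hcard]; exact Nat.odd_iff.mp hF.pow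
  have ht0 : t ≠ 0 := by
    intro h
    apply h0
    have h2 : (P.map (algebraMap F K)).eval t = 0 := by
      rw [Polynomial.eval_map, ← Polynomial.aeval_def, AdjoinRoot.aeval_eq, AdjoinRoot.mk_self]
    rw [h, Polynomial.eval_zero_map] at h2
    exact (_root_.map_eq_zero (algebraMap F K)).mp h2
  -- solve a'^2 + t b'^2 = mk g in K
  have hq : ∃ A B : K, A^2 + t*B^2 = AdjoinRoot.mk P g := by
    have hfdeg : (X^2 - C (AdjoinRoot.mk P g) : K[X]).degree = 2 :=
      Polynomial.degree_X_pow_sub_C (by norm_num) _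
    have hgdeg : (C t * X^2 : K[X]).degree = 2 := by
      simpa using Polynomial.degree_C_mul_X_pow 2 ht0
    obtain ⟨A, B, hAB⟩ := FiniteField.exists_root_sum_quadratic hfdeg hgdeg hcardKodd
    refine ⟨A, B, ?_⟩
    simp only [Polynomial.eval_sub, Polynomial.eval_add, Polynomial.eval_mul,
      Polynomial.eval_pow, Polynomial.eval_X, Polynomial.eval_C] at hAB
    linear_combination hAB
  obtain ⟨A, B, hAB⟩ := hq
  obtain ⟨a, rfl⟩ := AdjoinRoot.mk_surjective (g := P) A
  obtain ⟨b, rfl⟩ := AdjoinRoot.mk_surjective (g := P) B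
  refine ⟨a, b, ?_⟩
  rw [← AdjoinRoot.mk_eq_zero (f := P)]
  rw [map_sub, map_add, map_mul, map_pow, map_pow, AdjoinRoot.mk_X]
  rw [← ht, hAB]
  ring

lemma aux_aniso {P : F[X]} (hF : Odd (Fintype.card F)) (hPm : P.Monic)
    (hPi : Irreducible P) (h0 : P.eval 0 ≠ 0) (hns : ¬ IsSquare (P.eval 0))
    {a b : F[X]} (h : P ∣ a^2 + X*b^2) : P ∣ a ∧ P ∣ b := by
  haveI : Fact (Irreducible P) := ⟨hPi⟩
  have hmk : (AdjoinRoot.mk P a)^2 + (AdjoinRoot.root P) * (AdjoinRoot.mk P b)^2 = 0 := by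
    have h2 := (AdjoinRoot.mk_eq_zero (f := P)).mpr h
    rw [map_add, map_mul, map_pow, map_pow, AdjoinRoot.mk_X] at h2
    exact h2
  have hb : AdjoinRoot.mk P b = 0 := by
    by_contra hb0
    apply hns
    apply (aux_isSquare_neg_root_iff hF hPm hPi h0).mp
    refine ⟨(AdjoinRoot.mk P a) / (AdjoinRoot.mk P b), ?_⟩
    field_simp
    linear_combination -hmk
  refine ⟨?_, (AdjoinRoot.mk_eq_zero (f := P)).mp hb⟩
  have ha : (AdjoinRoot.mk P a)^2 = 0 := by
    rw [hb] at hmk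
    simpa using hmk
  rw [← AdjoinRoot.mk_eq_zero (f := P)]
  exact pow_eq_zero_iff (n := 2) (by norm_num) |>.mp ha

lemma aux_rep_unit {P : F[X]} (hF : Odd (Fintype.card F)) (hPm : P.Monic)
    (hPi : Irreducible P) (h0 : P.eval 0 ≠ 0) {g : F[X]} (hg : ¬ P ∣ g) (ν : ℕ) :
    ∃ A B : F[X], P ^ ν ∣ g - (A^2 + X*B^2) := by
  rcases ν with _ | ν
  · exact ⟨0, 0, by simp⟩
  obtain ⟨a, b, hab⟩ := aux_univ hF hPm hPi h0 g
  by_cases hPa : P ∣ a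
  · -- the representation mod P has a ≡ 0; then g ≡ X * b^2, use the inverse of X
    have hPX : ¬ P ∣ (X:F[X]) := aux_not_dvd_X hPi h0
    have hcop : IsCoprime (P^(ν+1)) (X:F[X]) :=
      ((hPi.coprime_iff_not_dvd).mpr hPX).pow_left
    obtain ⟨y, z, hyz⟩ := hcop
    have h1 : P ∣ g - X*b^2 := by
      have h2 : P ∣ a^2 := dvd_pow hPa two_ne_zero
      have h3 : g - X*b^2 = (g - (a^2 + X*b^2)) + a^2 := by ring
      rw [h3]; exact dvd_add hab h2
    have hPz : ¬ P ∣ z := by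
      intro h
      apply hPi.not_isUnit
      apply isUnit_of_dvd_one
      have h4 : (1:F[X]) = y*P^(ν+1) + z*X := hyz.symm
      rw [h4]
      refine dvd_add (Dvd.dvd.mul_left (dvd_pow_self P (Nat.succ_ne_zero ν)) y) ?_
      exact Dvd.dvd.mul_right (h.trans (dvd_refl z)) X
    have hzg : ¬ P ∣ z*g := fun h => ((hPi.prime.dvd_mul).mp h).elim hPz hg
    have hu : P ∣ z*g - b^2 := by
      have hexp : z*g - b^2 = z*(g - X*b^2) - (b^2*y)*P^(ν+1) := by
        linear_combination (b^2) * hyz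
      rw [hexp]
      exact dvd_sub (Dvd.dvd.mul_left h1 z)
        (Dvd.dvd.mul_left (dvd_pow_self P (Nat.succ_ne_zero ν)) _)
    obtain ⟨s, hs⟩ := aux_hensel hF hPi hzg hu (ν+1)
    refine ⟨0, s, ?_⟩
    have hexp2 : g - (0^2 + X*s^2) = (g*y)*P^(ν+1) + X*(z*g - s^2) := by
      linear_combination (-g) * hyz
    rw [hexp2]
    exact dvd_add (Dvd.dvd.mul_left dvd_rfl _) (Dvd.dvd.mul_left hs X)
  · -- the representation mod P has a ≢ 0; Hensel-lift a
    have hu : ¬ P ∣ g - X*b^2 := by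
      intro h
      apply hPa
      apply hPi.prime.dvd_of_dvd_pow (n := 2)
      have h3 : a^2 = (g - X*b^2) - (g - (a^2 + X*b^2)) := by ring
      rw [h3]; exact dvd_sub h hab
    have h1 : P ∣ (g - X*b^2) - a^2 := by
      have h3 : (g - X*b^2) - a^2 = g - (a^2 + X*b^2) := by ring
      rw [h3]; exact hab
    obtain ⟨s, hs⟩ := aux_hensel hF hPi hu h1 (ν+1)
    refine ⟨s, b, ?_⟩
    have h3 : g - (s^2 + X*b^2) = (g - X*b^2) - s^2 := by ring
    rw [h3]; exact hs

lemma aux_odd_step {P : F[X]} (hPi : Irreducible P)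
    (aniso : ∀ a b : F[X], P ∣ a^2 + X*b^2 → P ∣ a ∧ P ∣ b) :
    ∀ (m : ℕ) (A B : F[X]), P^(2*m+1) ∣ A^2 + X*B^2 → P^(2*m+2) ∣ A^2 + X*B^2 := by
  have hP0 : P ≠ 0 := hPi.ne_zero
  intro m
  induction m with
  | zero =>
    intro A B h
    have h1 : P ∣ A^2 + X*B^2 := (dvd_pow_self P one_ne_zero).trans (by simpa using h)
    obtain ⟨hA, hB⟩ := aniso A B h1
    obtain ⟨A1, rfl⟩ := hA
    obtain ⟨B1, rfl⟩ := hB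
    have h2 : (P*A1)^2 + X*(P*B1)^2 = P^2 * (A1^2 + X*B1^2) := by ring
    rw [h2]
    exact Dvd.dvd.mul_right (by norm_num) _
  | succ m ih =>
    intro A B h
    have h1 : P ∣ A^2 + X*B^2 :=
      (dvd_pow_self P (Nat.succ_ne_zero _)).trans h
    obtain ⟨hA, hB⟩ := aniso A B h1
    obtain ⟨A1, rfl⟩ := hA
    obtain ⟨B1, rfl⟩ := hB
    have h2 : (P*A1)^2 + X*(P*B1)^2 = P^2 * (A1^2 + X*B1^2) := by ring
    rw [h2] at h ⊢
    have h3 : P^2 * P^(2*m+1) ∣ P^2 * (A1^2 + X*B1^2) := by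
      rw [← pow_add]
      convert h using 2
      ring
    have h4 := (mul_dvd_mul_iff_left (pow_ne_zero 2 hP0)).mp h3
    have h5 := ih A1 B1 h4
    have h6 : P^2 * P^(2*m+2) ∣ P^2 * (A1^2 + X*B1^2) :=
      mul_dvd_mul_left _ h5
    rw [← pow_add] at h6
    convert h6 using 2
    ring

lemma aux_chi0_base {g A B : F[X]} (h : (X:F[X]) ∣ g - (A^2 + X*B^2)) :
    IsSquare (g.eval 0) := by
  rw [Polynomial.X_dvd_iff, Polynomial.coeff_zero_eq_eval_zero] at h
  simp only [Polynomial.eval_sub, Polynomial.eval_add, Polynomial.eval_mul,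
    Polynomial.eval_pow, Polynomial.eval_X, zero_mul, add_zero] at h
  exact ⟨A.eval 0, by linear_combination h⟩

lemma aux_chi0_forward : ∀ (α ν : ℕ) (g A B : F[X]), α < ν → ¬ (X:F[X]) ∣ g →
    (X:F[X])^ν ∣ X^α * g - (A^2 + X*B^2) → IsSquare (g.eval 0) := by
  intro α
  induction α using Nat.strong_induction_on with
  | _ α ih =>
  intro ν g A B hαν hXg hdvd
  have hX0 : (X:F[X]) ≠ 0 := X_ne_zero
  have hXdvd : (X:F[X]) ∣ X^ν := dvd_pow_self X (by omega)
  match α, ih with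
  | 0, _ =>
    apply aux_chi0_base (A := A) (B := B)
    have := hXdvd.trans hdvd
    simpa using this
  | 1, ih =>
    -- X ∣ A, divide once by X
    obtain ⟨ν', rfl⟩ : ∃ ν', ν = ν' + 1 := ⟨ν - 1, by omega⟩
    have hXA : (X:F[X]) ∣ A := by
      apply Polynomial.prime_X.dvd_of_dvd_pow (n := 2)
      have h1 : (X:F[X]) ∣ X^1*g - (A^2 + X*B^2) := hXdvd.trans hdvd
      have h2 : A^2 = X^1*g - (X^1*g - (A^2+X*B^2)) - X*B^2 := by ring
      rw [h2]
      exact dvd_sub (dvd_sub (by rw [pow_one]; exact dvd_mul_right X g) h1)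
        (dvd_mul_right X (B^2))
    obtain ⟨A1, rfl⟩ := hXA
    obtain ⟨k, hk⟩ := hdvd
    have hk2 : X * (g - (B^2 + X*A1^2)) = X * (X^ν' * k) := by
      rw [pow_succ] at hk
      linear_combination hk
    have hk3 : g - (B^2 + X*A1^2) = X^ν' * k := mul_left_cancel₀ hX0 hk2
    apply aux_chi0_base (A := B) (B := A1)
    have hν' : (X:F[X]) ∣ X^ν' := dvd_pow_self X (by omega)
    rw [hk3]
    exact hν'.trans (Dvd.intro k rfl)
  | (α'+2), ih =>
    obtain ⟨ν', rfl⟩ : ∃ ν', ν = ν' + 2 := ⟨ν - 2, by omega⟩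
    have hX2 : (X:F[X])^2 ∣ X^(α'+2)*g - (A^2 + X*B^2) :=
      (pow_dvd_pow X (by omega)).trans hdvd
    have hSdvd : (X:F[X])^2 ∣ A^2 + X*B^2 := by
      have h2 : A^2 + X*B^2 = X^(α'+2)*g - (X^(α'+2)*g - (A^2+X*B^2)) := by ring
      rw [h2]
      refine dvd_sub ?_ hX2
      exact Dvd.dvd.mul_right (pow_dvd_pow X (by omega)) g
    have hXA : (X:F[X]) ∣ A := by
      apply Polynomial.prime_X.dvd_of_dvd_pow (n := 2)
      have h1 : (X:F[X]) ∣ A^2 + X*B^2 := (dvd_pow_self X two_ne_zero).trans hSdvd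
      have h2 : A^2 = (A^2 + X*B^2) - X*B^2 := by ring
      rw [h2]
      exact dvd_sub h1 (dvd_mul_right X (B^2))
    obtain ⟨A1, rfl⟩ := hXA
    have hXB : (X:F[X]) ∣ B := by
      apply Polynomial.prime_X.dvd_of_dvd_pow (n := 2)
      obtain ⟨w, hw⟩ := hSdvd
      have h2 : X * B^2 = X * (X*w - X*A1^2) := by
        linear_combination hw
      have h3 : B^2 = X*w - X*A1^2 := mul_left_cancel₀ hX0 h2
      rw [h3]
      exact dvd_sub (dvd_mul_right X w) (dvd_mul_right X (A1^2))
    obtain ⟨B1, rfl⟩ := hXB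
    obtain ⟨k, hk⟩ := hdvd
    have hk2 : (X:F[X])^2 * (X^α'*g - (A1^2 + X*B1^2)) = X^2 * (X^ν' * k) := by
      have h4 : (X:F[X])^(ν'+2) = X^2 * X^ν' := by rw [← pow_add]; ring_nf
      rw [h4, mul_assoc] at hk
      linear_combination hk
    have hk3 : X^α'*g - (A1^2 + X*B1^2) = X^ν' * k :=
      mul_left_cancel₀ (pow_ne_zero 2 hX0) hk2
    exact ih α' (by omega) ν' g A1 B1 (by omega) hXg ⟨k, hk3⟩

end AuxLemmas

/-- **Lemma (characterization of `𝒜_q(P^ν)`).**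
Let `P` be monic irreducible, `ν ≥ 1`, and `f = P^α·g` with `P ∤ g` and `P^ν ∤ f`
(so `α = v_P(f) < ν`). Then: if `χ_q(P) = −1`, `f mod P^ν ∈ 𝒜_q(P^ν)` iff `α` is even;
if `χ_q(P) = 0`, iff `g(0)` is a nonzero square, i.e. `χ_q(g) = 1`;
if `χ_q(P) = 1`, always. -/
theorem mem_Aset_characterization (F : Type) [Field F] [Fintype F]
    (hF : Odd (Fintype.card F)) (P : F[X]) (hPm : P.Monic) (hPi : Irreducible P)
    (ν : ℕ) (hν : 1 ≤ ν) (f g : F[X]) (α : ℕ)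
    (hfg : f = P ^ α * g) (hg : ¬ P ∣ g) (hf : ¬ P ^ ν ∣ f) :
    (chiq F P = -1 →
      (Ideal.Quotient.mk (Ideal.span {P ^ ν}) f ∈ Aset F (P ^ ν) ↔ Even α)) ∧
    (chiq F P = 0 →
      (Ideal.Quotient.mk (Ideal.span {P ^ ν}) f ∈ Aset F (P ^ ν) ↔ chiq F g = 1)) ∧
    (chiq F P = 1 →
      Ideal.Quotient.mk (Ideal.span {P ^ ν}) f ∈ Aset F (P ^ ν)) := by
  subst hfg
  have hmem : ∀ f' : F[X],
      (Ideal.Quotient.mk (Ideal.span {P ^ ν}) f' ∈ Aset F (P ^ ν)) ↔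
      ∃ A B : F[X], P^ν ∣ f' - (A^2 + X*B^2) := by
    intro f'
    constructor
    · rintro ⟨A, B, hAB⟩
      exact ⟨A, B, Ideal.mem_span_singleton.mp (Ideal.Quotient.eq.mp hAB)⟩
    · rintro ⟨A, B, hAB⟩
      exact ⟨A, B, Ideal.Quotient.eq.mpr (Ideal.mem_span_singleton.mpr hAB)⟩
  have hαν : α < ν := by
    by_contra hc
    exact hf (dvd_mul_of_dvd_left (pow_dvd_pow P (by omega)) g)
  refine ⟨?_, ?_, ?_⟩
  · -- χ(P) = -1
    intro hchiP
    have hP0' : P.eval 0 ≠ 0 ∧ ¬ IsSquare (P.eval 0) := by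
      unfold chiq at hchiP
      split_ifs at hchiP with h1 h2
      · norm_num at hchiP
      · norm_num at hchiP
      · exact ⟨h1, h2⟩
    obtain ⟨hP0, hns⟩ := hP0'
    rw [hmem]
    constructor
    · rintro ⟨A, B, hAB⟩
      by_contra hodd
      rw [Nat.not_even_iff_odd] at hodd
      obtain ⟨m, hm⟩ := hodd
      have aniso : ∀ a b : F[X], P ∣ a^2 + X*b^2 → P ∣ a ∧ P ∣ b :=
        fun a b h => aux_aniso hF hPm hPi hP0 hns h
      have hSdvd : P^α ∣ A^2 + X*B^2 := by
        have h1 : A^2 + X*B^2 = P^α*g - (P^α*g - (A^2+X*B^2)) := by ring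
        rw [h1]
        exact dvd_sub (Dvd.dvd.mul_right (dvd_refl _) g)
          ((pow_dvd_pow P (le_of_lt hαν)).trans hAB)
      rw [hm] at hSdvd
      have hstep := aux_odd_step hPi aniso m A B hSdvd
      have hfdvd : P^(2*m+2) ∣ P^α * g := by
        have h1 : P^α*g = (P^α*g - (A^2+X*B^2)) + (A^2+X*B^2) := by ring
        rw [h1]
        exact dvd_add ((pow_dvd_pow P (by omega)).trans hAB) hstep
      apply hg
      obtain ⟨w, hw⟩ := hfdvd
      rw [hm] at hw
      refine ⟨w, mul_left_cancel₀ (pow_ne_zero (2*m+1) hPi.ne_zero) ?_⟩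
      rw [hw, pow_succ]
      ring
    · intro heven
      obtain ⟨r, hr⟩ := heven
      obtain ⟨A, B, hAB⟩ := aux_rep_unit hF hPm hPi hP0 hg ν
      refine ⟨P^r*A, P^r*B, ?_⟩
      have h1 : P^α*g - ((P^r*A)^2 + X*(P^r*B)^2) = (P^r*P^r)*(g - (A^2 + X*B^2)) := by
        rw [hr, pow_add]; ring
      rw [h1]
      exact Dvd.dvd.mul_left hAB _
  · -- χ(P) = 0, i.e. P = X
    intro hchiP
    have hP0 : P.eval 0 = 0 := by
      unfold chiq at hchiP
      split_ifs at hchiP with h1 h2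
      · exact h1
      · norm_num at hchiP
      · norm_num at hchiP
    have hPX : P = X := by
      have hdvd : (X:F[X]) ∣ P := Polynomial.X_dvd_iff.mpr
        (by rw [Polynomial.coeff_zero_eq_eval_zero]; exact hP0)
      obtain ⟨c, hc⟩ := hdvd
      rcases hPi.isUnit_or_isUnit hc with h | h
      · exact absurd h Polynomial.not_isUnit_X
      · obtain ⟨r, hru, hCr⟩ := Polynomial.isUnit_iff.mp h
        have h2 : P.leadingCoeff = r := by
          rw [hc, ← hCr, Polynomial.leadingCoeff_mul, Polynomial.leadingCoeff_X,
            Polynomial.leadingCoeff_C, one_mul]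
        have h3 : r = 1 := by rw [← h2]; exact hPm.leadingCoeff
        rw [hc, ← hCr, h3, map_one, mul_one]
    subst hPX
    have hg0 : g.eval 0 ≠ 0 := by
      intro h
      exact hg (Polynomial.X_dvd_iff.mpr
        (by rwa [Polynomial.coeff_zero_eq_eval_zero]))
    have hchig : chiq F g = 1 ↔ IsSquare (g.eval 0) := by
      unfold chiq
      rw [if_neg hg0]
      by_cases hs : IsSquare (g.eval 0)
      · rw [if_pos hs]; simp [hs]
      · rw [if_neg hs]
        constructor
        · intro h; norm_num at h
        · intro h; exact absurd h hs
    rw [hmem, hchig]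
    constructor
    · rintro ⟨A, B, hAB⟩
      exact aux_chi0_forward α ν g A B hαν hg hAB
    · intro hs
      obtain ⟨c, hc⟩ := hs
      have hbase : (X:F[X]) ∣ g - (C c)^2 := by
        rw [Polynomial.X_dvd_iff, Polynomial.coeff_zero_eq_eval_zero]
        rw [Polynomial.eval_sub, Polynomial.eval_pow, Polynomial.eval_C, hc]
        ring
      obtain ⟨s, hs'⟩ := aux_hensel hF Polynomial.irreducible_X hg hbase ν
      rcases Nat.even_or_odd α with he | ho
      · obtain ⟨r, hr⟩ := he
        refine ⟨X^r*s, 0, ?_⟩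
        have h1 : X^α*g - ((X^r*s)^2 + X*0^2) = (X^r*X^r)*(g - s^2) := by
          rw [hr, pow_add]; ring
        rw [h1]
        exact Dvd.dvd.mul_left hs' _
      · obtain ⟨r, hr⟩ := ho
        refine ⟨0, X^r*s, ?_⟩
        have hXp : (X:F[X])^(2*r+1) = X^r * X^r * X := by
          rw [pow_succ, two_mul, pow_add]
        have h1 : X^α*g - (0^2 + X*(X^r*s)^2) = (X^r*X^r*X)*(g - s^2) := by
          rw [hr, hXp]; ring
        rw [h1]
        exact Dvd.dvd.mul_left hs' _
  · -- χ(P) = 1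
    intro hchiP
    have hP0' : P.eval 0 ≠ 0 ∧ IsSquare (P.eval 0) := by
      unfold chiq at hchiP
      split_ifs at hchiP with h1 h2
      · norm_num at hchiP
      · exact ⟨h1, h2⟩
      · norm_num at hchiP
    obtain ⟨hP0, hsq⟩ := hP0'
    rw [hmem]
    haveI : Fact (Irreducible P) := ⟨hPi⟩
    have hsqt : IsSquare (-(AdjoinRoot.root P)) :=
      (aux_isSquare_neg_root_iff hF hPm hPi hP0).mpr hsq
    obtain ⟨y, hy⟩ := hsqt
    obtain ⟨y0, rfl⟩ := AdjoinRoot.mk_surjective (g := P) y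
    have hbase : P ∣ (-X) - y0^2 := by
      rw [← AdjoinRoot.mk_eq_zero (f := P)]
      rw [map_sub, map_neg, AdjoinRoot.mk_X, map_pow]
      rw [sq (AdjoinRoot.mk P y0), ← hy]
      ring
    have hnX : ¬ P ∣ (-X : F[X]) := by
      rw [dvd_neg]; exact aux_not_dvd_X hPi hP0
    obtain ⟨s, hs⟩ := aux_hensel hF hPi hnX hbase ν
    have hPs : ¬ P ∣ s := by
      intro h
      apply aux_not_dvd_X hPi hP0
      have h1 : P ∣ -X - s^2 := (dvd_pow_self P (by omega : ν ≠ 0)).trans hs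
      have h2 : P ∣ s^2 := dvd_pow h two_ne_zero
      have h3 : (X:F[X]) = -((-X - s^2) + s^2) := by ring
      rw [h3]
      exact (dvd_add h1 h2).neg_right
    have hcop : IsCoprime (P^ν) s := ((hPi.coprime_iff_not_dvd).mpr hPs).pow_left
    obtain ⟨y1, z, hyz⟩ := hcop
    have h2F : (2:F) ≠ 0 := aux_two_ne_zero hF
    have hinv : C ((2:F)⁻¹) * C (2:F) = 1 := by
      rw [← C_mul, inv_mul_cancel₀ h2F, C_1]
    have hinv2 : C ((2:F)⁻¹) * (2:F[X]) = 1 := by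
      rw [← map_ofNat C 2]; exact hinv
    refine ⟨C ((2:F)⁻¹) * (1 + P^α*g), (C ((2:F)⁻¹) * (1 - P^α*g)) * z, ?_⟩
    have hXs : P^ν ∣ X + s^2 := by
      have := hs.neg_right
      simpa [add_comm] using this
    have hzs : P^ν ∣ z*s - 1 := ⟨-y1, by linear_combination hyz⟩
    have heq : P^α*g - ((C ((2:F)⁻¹) * (1 + P^α*g))^2 + X*((C ((2:F)⁻¹) * (1 - P^α*g)) * z)^2)
        = -(((C ((2:F)⁻¹) * (1 - P^α*g))^2 * z^2) * (X + s^2))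
          + ((C ((2:F)⁻¹) * (1 - P^α*g))^2 * (z*s + 1)) * (z*s - 1) := by
      linear_combination (-((P^α*g) * (C ((2:F)⁻¹) * (2:F[X]) + 1))) * hinv2
    rw [heq]
    exact dvd_add (dvd_neg.mpr (Dvd.dvd.mul_left hXs _)) (Dvd.dvd.mul_left hzs _)
end

section
/- Let q be an odd prime power, P ∈ 𝔽_q[T] monic irreducible and ν ≥ 1. Then: (1) if χ_q(P) = −1, then #𝒜_q(P^ν) = |P|^ν·(1 − 1/(|P|+1)) + |P|/(|P|+1) when ν is odd, and #𝒜_q(P^ν) = |P|^ν·(1 − 1/(|P|+1)) + 1/(|P|+1) when ν is even; (2) if χ_q(P) = 0 (i.e. P = T), then #𝒜_q(P^ν) = (|P|^ν + 1)/2; (3) if χ_q(P) = 1, then #𝒜_q(P^ν) = |P|^ν. -/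
open Polynomial Filter

open scoped Classical

set_option linter.unusedSectionVars false
set_option maxHeartbeats 1000000

namespace CardAsetAux
open Polynomial
variable {F : Type*} [Field F] [Fintype F]

lemma card_quot {g : F[X]} (hg : g.Monic) :
    Nat.card (F[X] ⧸ Ideal.span {g}) = Fintype.card F ^ g.natDegree := by
  have b : Module.Basis (Fin g.natDegree) F (AdjoinRoot g) := (AdjoinRoot.powerBasis' hg).basis
  letI : Fintype (AdjoinRoot g) := Module.fintypeOfFintype b
  have := Module.card_fintype b
  show Nat.card (AdjoinRoot g) = _
  rw [Nat.card_eq_fintype_card, this, Fintype.card_fin]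

lemma finite_quot {g : F[X]} (hg : g.Monic) : Finite (F[X] ⧸ Ideal.span {g}) :=
  Nat.finite_of_card_ne_zero (by rw [card_quot hg]; positivity)

lemma mk_eq_zero_iff {g f : F[X]} :
    Ideal.Quotient.mk (Ideal.span {g}) f = 0 ↔ g ∣ f := by
  rw [Ideal.Quotient.eq_zero_iff_mem, Ideal.mem_span_singleton]

lemma not_dvd_C {P : F[X]} (hP : Irreducible P) {c : F} (hc : c ≠ 0) : ¬ P ∣ C c := by
  intro h
  exact hP.not_isUnit (isUnit_of_dvd_unit h (isUnit_C.2 hc.isUnit))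

lemma not_dvd_two {P : F[X]} (hP : Irreducible P) (h2 : (2:F) ≠ 0) : ¬ P ∣ 2 := by
  rw [← (map_ofNat (C : F →+* F[X]) 2)]; exact not_dvd_C hP h2

lemma hensel_sq {P w u β : F[X]} (hP : Irreducible P) (h2 : (2:F) ≠ 0)
    (hw : ¬ P ∣ w) (hβ : ¬ P ∣ β) (h1 : P ∣ w * β^2 - u) :
    ∀ m : ℕ, ∃ γ, ¬ P ∣ γ ∧ P^m ∣ w * γ^2 - u := by
  have hprime : Prime P := hP.prime
  intro m
  induction m with
  | zero => exact ⟨β, hβ, one_dvd _⟩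
  | succ m ih =>
    obtain ⟨γ, hγ, hd⟩ := ih
    rcases Nat.eq_zero_or_pos m with rfl | hm
    · exact ⟨β, hβ, by simpa using h1⟩
    obtain ⟨k, rfl⟩ := Nat.exists_eq_add_of_le hm
    obtain ⟨c, hc⟩ := hd
    have hne : ¬ P ∣ (2*w*γ) := by
      intro h
      rcases (hprime.dvd_mul.1 h) with h' | h'
      · rcases hprime.dvd_mul.1 h' with h'' | h''
        · exact not_dvd_two hP h2 h''
        · exact hw h''
      · exact hγ h'
    obtain ⟨a, b, hab⟩ := (hP.coprime_iff_not_dvd.2 hne)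
    set t := -(b*c) with htdef
    have hdvd : P ∣ c + 2*w*γ*t := by
      refine ⟨a * c, ?_⟩
      rw [htdef]
      linear_combination c * hab.symm
    obtain ⟨s, hs⟩ := hdvd
    refine ⟨γ + t * P^(1+k), ?_, ?_⟩
    · intro h
      apply hγ
      have : γ = (γ + t * P^(1+k)) - t * P^(1+k) := by ring
      rw [this]
      exact dvd_sub h (Dvd.dvd.mul_left (dvd_pow_self P (by omega)) t)
    · refine ⟨s + w * t^2 * P^k, ?_⟩
      linear_combination hc + P^(1+k)*hs

lemma finRotate_val {d : ℕ} (hd : 1 ≤ d) (i : Fin d) :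
    ((finRotate d i : Fin d) : ℕ) = ((i : ℕ) + 1) % d := by
  obtain ⟨e, rfl⟩ : ∃ e, d = e + 1 := ⟨d - 1, by omega⟩
  rw [finRotate_succ_apply, Fin.val_add]
  rcases Nat.eq_zero_or_pos e with rfl | he1
  · simp [Nat.mod_one]
  · have h1 : ((1 : Fin (e + 1)) : ℕ) = 1 := by
      rw [Fin.val_one']
      exact Nat.mod_eq_of_lt (by omega)
    rw [h1]

lemma fixed_mem_range {K : Type*} [Field K] [Fintype K] [Algebra F K]
    (x : K) (hx : x ^ (Fintype.card F) = x) : ∃ c : F, algebraMap F K c = x := by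
  classical
  set q := Fintype.card F with hq
  set h : K[X] := X ^ q - X with hh
  have hq1 : 1 < q := Fintype.one_lt_card
  have hcoeff : h.coeff q = 1 := by
    rw [hh, coeff_sub, coeff_X_pow, if_pos rfl, coeff_X, if_neg (by omega), sub_zero]
  have hne : h ≠ 0 := by
    intro h0; rw [h0] at hcoeff; simp at hcoeff
  have hdeg : h.natDegree ≤ q := by
    refine le_trans (natDegree_sub_le _ _) ?_
    simp only [natDegree_X_pow, natDegree_X]
    omega
  set s : Finset K := Finset.univ.image (algebraMap F K) with hs
  have hsub : s ⊆ h.roots.toFinset := by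
    intro y hy
    rw [hs, Finset.mem_image] at hy
    obtain ⟨c, _, rfl⟩ := hy
    rw [Multiset.mem_toFinset, mem_roots hne]
    simp only [IsRoot, hh, eval_sub, eval_pow, eval_X]
    rw [← map_pow, FiniteField.pow_card, sub_self]
  have hcards : s.card = q := by
    rw [hs, Finset.card_image_of_injective _ (algebraMap F K).injective, Finset.card_univ]
  have hroots : h.roots.toFinset.card ≤ q :=
    le_trans (Multiset.toFinset_card_le _) (le_trans (card_roots' h) hdeg)
  have hseq : s = h.roots.toFinset :=
    Finset.eq_of_subset_of_card_le hsub (by omega)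
  have hxr : x ∈ h.roots.toFinset := by
    rw [Multiset.mem_toFinset, mem_roots hne]
    simp only [IsRoot, hh, eval_sub, eval_pow, eval_X]
    rw [hx, sub_self]
  rw [← hseq, hs, Finset.mem_image] at hxr
  obtain ⟨c, _, hc⟩ := hxr
  exact ⟨c, hc⟩

lemma isSquare_neg_root_iff (hq : Odd (Fintype.card F)) {P : F[X]} (hP : Irreducible P)
    (hPm : P.Monic) (h0 : P.eval 0 ≠ 0) :
    IsSquare (-(AdjoinRoot.root P)) ↔ IsSquare (P.eval 0) := by
  classical
  haveI : Fact (Irreducible P) := ⟨hP⟩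
  set K := AdjoinRoot P with hK
  haveI : Fintype K := Module.fintypeOfFintype (AdjoinRoot.powerBasis' hPm).basis
  set q := Fintype.card F with hqdef
  set d := P.natDegree with hd
  have hd1 : 1 ≤ d := hP.natDegree_pos
  have hcard : Fintype.card K = q ^ d := by
    have h := Module.card_fintype (AdjoinRoot.powerBasis' hPm).basis
    simpa using h
  set α := AdjoinRoot.root P with hα
  have hαcard : α ^ q ^ d = α := by
    conv_rhs => rw [← FiniteField.pow_card α]
    rw [hcard]
  have hcyc : ∀ k, α ^ q ^ (k % d) = α ^ q ^ k := by
    intro k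
    induction k using Nat.strong_induction_on with
    | _ k ih =>
      rcases lt_or_ge k d with h | h
      · rw [Nat.mod_eq_of_lt h]
      · obtain ⟨k', rfl⟩ := Nat.exists_eq_add_of_le h
        rw [Nat.add_mod_left, ih k' (by omega), pow_add, pow_mul, hαcard]
  -- Frobenius
  set p := ringChar F with hp
  haveI : CharP F p := ringChar.charP F
  obtain ⟨n, hpp, hqpn⟩ := FiniteField.card F p
  haveI : Fact p.Prime := ⟨hpp⟩
  haveI : CharP K p := charP_of_injective_algebraMap (algebraMap F K).injective p
  set φ := iterateFrobenius K p n with hφdef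
  have hφ : ∀ x : K, φ x = x ^ q := by
    intro x; rw [hφdef, iterateFrobenius_def, ← hqpn]
  set gpoly := ∏ i : Fin d, (X - C (α ^ q ^ (i : ℕ))) with hg
  have hgmonic : gpoly.Monic := monic_prod_of_monic _ _ (fun i _ => monic_X_sub_C _)
  have hstep : ∀ i : Fin d, (X - C (α ^ q ^ (i : ℕ))).map φ
      = X - C (α ^ q ^ ((finRotate d i : Fin d) : ℕ)) := by
    intro i
    rw [Polynomial.map_sub, map_X, map_C, hφ]
    congr 1
    rw [← pow_mul, ← pow_succ, finRotate_val hd1 i, hcyc]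
  have hmap : gpoly.map φ = gpoly := by
    rw [hg, Polynomial.map_prod]
    rw [Finset.prod_congr rfl (fun i _ => hstep i)]
    exact Equiv.prod_comp (finRotate d) (fun j : Fin d => X - C (α ^ q ^ (j : ℕ)))
  have hfix : ∀ j, (gpoly.coeff j) ^ q = gpoly.coeff j := by
    intro j
    conv_rhs => rw [← hmap]
    rw [coeff_map, hφ]
  have hlifts : gpoly ∈ lifts (algebraMap F K) := by
    rw [lifts_iff_coeff_lifts]
    intro j
    exact fixed_mem_range _ (hfix j)
  obtain ⟨G, hGmap, hGdeg, hGmonic⟩ := lifts_and_degree_eq_and_monic hlifts hgmonic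
  have hgdeg : gpoly.natDegree = d := by
    rw [hg, natDegree_prod_of_monic _ _ (fun i _ => monic_X_sub_C _),
      Finset.sum_congr rfl (fun (i : Fin d) _ => natDegree_X_sub_C (α ^ q ^ (i:ℕ)))]
    simp
  have hGnd : G.natDegree = d := by
    rw [← hgdeg]
    exact natDegree_eq_of_degree_eq hGdeg
  have hmin : minpoly F α = P := by
    rw [AdjoinRoot.minpoly_root hP.ne_zero, hPm.leadingCoeff]
    simp
  have haev : (Polynomial.aeval α) G = 0 := by
    rw [aeval_def, ← eval_map, hGmap, hg, eval_prod]
    refine Finset.prod_eq_zero (Finset.mem_univ (⟨0, by omega⟩ : Fin d)) ?_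
    simp
  have hdvd : P ∣ G := hmin ▸ minpoly.dvd F α haev
  obtain ⟨cc, rfl⟩ := hdvd
  have hcc0 : cc ≠ 0 := by
    intro h; rw [h, mul_zero] at hGmonic; exact hGmonic.ne_zero rfl
  have hccdeg : cc.natDegree = 0 := by
    have := natDegree_mul hP.ne_zero hcc0
    omega
  have hccm : cc.Monic := hPm.of_mul_monic_left hGmonic
  have hcc1 : cc = 1 := hccm.natDegree_eq_zero.1 hccdeg
  subst hcc1
  rw [mul_one] at hGmap
  -- evaluate at 0
  set s := ∑ i : Fin d, q ^ (i : ℕ) with hsdef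
  have hPι : algebraMap F K (P.eval 0) = (-1) ^ d * α ^ s := by
    have h1 : (P.map (algebraMap F K)).eval 0 = algebraMap F K (P.eval 0) := by
      rw [eval_map, eval₂_at_zero, coeff_zero_eq_eval_zero]
    rw [← h1, hGmap, hg, eval_prod]
    have h2 : ∀ i : Fin d, (X - C (α ^ q ^ (i:ℕ))).eval 0 = (-1) * α ^ q ^ (i:ℕ) := by
      intro i; simp
    rw [Finset.prod_congr rfl (fun i _ => h2 i), Finset.prod_mul_distrib, Finset.prod_const,
      Finset.prod_pow_eq_pow_sum]
    simp [Finset.card_univ]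
    rfl
  have hspar : s % 2 = d % 2 := by
    have h1 : ∀ i : Fin d, q ^ (i:ℕ) % 2 = 1 := fun i => Nat.odd_iff.1 hq.pow
    rw [hsdef, Finset.sum_nat_mod, Finset.sum_congr rfl (fun i _ => h1 i), Finset.sum_const]
    simp
  have hpow : ((-1 : K)) ^ s = (-1 : K) ^ d := by
    rcases Nat.even_or_odd s with hev | hod
    · have hd2 : Even d := by rw [Nat.even_iff] at hev ⊢; omega
      rw [hev.neg_one_pow, hd2.neg_one_pow]
    · have hd2 : Odd d := by rw [Nat.odd_iff] at hod ⊢; omega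
      rw [hod.neg_one_pow, hd2.neg_one_pow]
  have hkey : (-α) ^ s = algebraMap F K (P.eval 0) := by
    rw [neg_pow, hPι, hpow]
  have hq1 : 1 ≤ q := Fintype.card_pos
  have hgeom : q ^ d = (q - 1) * s + 1 := by
    have hs' : (s:ℤ) = ∑ i ∈ Finset.range d, (q:ℤ) ^ i := by
      rw [hsdef, Fin.sum_univ_eq_sum_range]
      push_cast
      ring
    have hcast : ((q:ℤ) - 1) * (s:ℤ) = (q:ℤ) ^ d - 1 := by
      rw [hs', mul_comm]
      exact geom_sum_mul (q:ℤ) d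
    zify [hq1]
    linear_combination -hcast
  obtain ⟨r, hr⟩ := id hq
  have hoddq : q % 2 = 1 := Nat.odd_iff.1 hq
  have hcardK2 : Fintype.card K / 2 = r * s := by
    have h2 : q ^ d = 2 * (r * s) + 1 := by
      have h3 : q - 1 = 2 * r := by omega
      rw [hgeom, h3]
      ring
    rw [hcard]
    generalize r * s = m at h2 ⊢
    omega
  have hoddK : Fintype.card K % 2 = 1 := by
    rw [hcard]
    exact Nat.odd_iff.1 hq.pow
  have hchar2F : ringChar F ≠ 2 := fun h => by
    have := FiniteField.even_card_iff_char_two.1 h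
    omega
  have hchar2K : ringChar K ≠ 2 := fun h => by
    have := FiniteField.even_card_iff_char_two.1 h
    omega
  have hα0 : α ≠ 0 := by
    intro h
    apply h0
    have h5 := AdjoinRoot.eval₂_root P
    rw [← hα, h, eval₂_at_zero] at h5
    have h2 : P.coeff 0 = 0 := by
      have hinj : Function.Injective (AdjoinRoot.of P) := (AdjoinRoot.of P).injective
      have h6 : AdjoinRoot.of P (P.coeff 0) = AdjoinRoot.of P 0 := by rw [h5, map_zero]
      exact hinj h6
    rw [← coeff_zero_eq_eval_zero]
    exact h2
  have hneg0 : -α ≠ 0 := neg_ne_zero.2 hα0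
  rw [FiniteField.isSquare_iff hchar2K hneg0, FiniteField.isSquare_iff hchar2F h0]
  rw [hcardK2, mul_comm r s, pow_mul, hkey, ← map_pow]
  have hr2 : q / 2 = r := by omega
  rw [hr2]
  constructor
  · intro h
    have h7 : algebraMap F K (P.eval 0 ^ r) = algebraMap F K 1 := by rw [map_one]; exact h
    exact (algebraMap F K).injective h7
  · intro h
    rw [h, map_one]

-- ψ : multiplication by P^j
lemma psi_exists (P : F[X]) (hP : P ≠ 0) (j m n : ℕ) (hn : j + m = n) :
    ∃ ψ : (F[X] ⧸ Ideal.span {P^m}) →+ (F[X] ⧸ Ideal.span {P^n}),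
      (∀ f : F[X], ψ (Ideal.Quotient.mk _ f) = Ideal.Quotient.mk _ (P^j * f)) ∧
        Function.Injective ψ := by
  subst hn
  have hle : (Ideal.span {P^m} : Ideal F[X]) ≤
      Submodule.comap (LinearMap.mulLeft F[X] (P^j)) (Ideal.span {P^(j+m)}) := by
    intro x hx
    rw [Ideal.mem_span_singleton] at hx
    obtain ⟨c, rfl⟩ := hx
    simp only [Submodule.mem_comap, LinearMap.mulLeft_apply]
    rw [Ideal.mem_span_singleton]
    exact ⟨c, by ring⟩
  set ψ0 := Submodule.mapQ (Ideal.span {P^m}) (Ideal.span {P^(j+m)})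
    (LinearMap.mulLeft F[X] (P^j)) hle with hψ0
  have hspec : ∀ f : F[X], ψ0.toAddMonoidHom (Ideal.Quotient.mk (Ideal.span {P^m}) f)
      = Ideal.Quotient.mk (Ideal.span {P^(j+m)}) (P^j * f) := by
    intro f
    show ψ0 (Submodule.Quotient.mk f) = _
    rw [hψ0, Submodule.mapQ_apply]
    rfl
  refine ⟨ψ0.toAddMonoidHom, hspec, ?_⟩
  intro x y hxy
  obtain ⟨a, rfl⟩ := Ideal.Quotient.mk_surjective x
  obtain ⟨b, rfl⟩ := Ideal.Quotient.mk_surjective y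
  rw [hspec a, hspec b] at hxy
  rw [Ideal.Quotient.eq] at hxy ⊢
  rw [Ideal.mem_span_singleton] at hxy ⊢
  have h2 : P^j * a - P^j * b = P^j * (a - b) := by ring
  rw [h2, pow_add, mul_dvd_mul_iff_left (pow_ne_zero j hP)] at hxy
  exact hxy

-- cardinality of preimages under surjective group homs
lemma card_preimage {A B : Type*} [AddCommGroup A] [AddCommGroup B] (φ : A →+ B)
    (hs : Function.Surjective φ) (S : Set B) :
    Nat.card (φ ⁻¹' S) = Nat.card S * Nat.card (φ ⁻¹' ({0} : Set B)) := by
  classical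
  choose σ hσ using hs
  have e : (φ ⁻¹' S) ≃ S × (φ ⁻¹' ({0} : Set B)) :=
    { toFun := fun x => (⟨φ x.1, x.2⟩, ⟨x.1 - σ (φ x.1), by
        simp only [Set.mem_preimage, map_sub, hσ, Set.mem_singleton_iff, sub_self]⟩)
      invFun := fun y => ⟨σ y.1.1 + y.2.1, by
        have h2 : φ y.2.1 = 0 := y.2.2
        simp only [Set.mem_preimage, map_add, hσ, h2, add_zero]
        exact y.1.2⟩
      left_inv := fun x => by
        ext
        simp
      right_inv := fun y => by
        have h2 : φ y.2.1 = 0 := y.2.2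
        ext
        · simp [hσ, h2]
        · simp [hσ, h2] }
  rw [Nat.card_congr e, Nat.card_prod]

lemma card_nonzero_squares (hq : Odd (Fintype.card F)) :
    2 * Nat.card {c : F // c ≠ 0 ∧ IsSquare c} = Fintype.card F - 1 := by
  classical
  have hchar : ringChar F ≠ 2 := fun h => by
    have := FiniteField.even_card_iff_char_two.1 h
    have := Nat.odd_iff.1 hq
    omega
  have h2 : (2 : F) ≠ 0 := Ring.two_ne_zero hchar
  set T : Finset F := Finset.univ.filter (fun x => x ≠ 0) with hT
  set S : Finset F := T.image (fun x => x^2) with hS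
  have hTcard : T.card = Fintype.card F - 1 := by
    rw [hT, Finset.filter_ne', Finset.card_erase_of_mem (Finset.mem_univ 0), Finset.card_univ]
  have hfib : ∀ a ∈ S, (T.filter (fun x => x^2 = a)).card = 2 := by
    intro a ha
    rw [hS, Finset.mem_image] at ha
    obtain ⟨b, hb, rfl⟩ := ha
    rw [hT, Finset.mem_filter] at hb
    have hb0 : b ≠ 0 := hb.2
    have : T.filter (fun x => x^2 = b^2) = {b, -b} := by
      ext x
      simp only [Finset.mem_filter, hT, Finset.mem_univ, true_and, Finset.mem_insert,
        Finset.mem_singleton]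
      constructor
      · rintro ⟨hx0, hx⟩
        exact sq_eq_sq_iff_eq_or_eq_neg.1 hx
      · rintro (rfl | rfl)
        · exact ⟨hb0, rfl⟩
        · exact ⟨neg_ne_zero.2 hb0, by ring⟩
    rw [this, Finset.card_insert_of_notMem, Finset.card_singleton]
    rw [Finset.mem_singleton]
    intro h
    have hsum : b + b = 0 := eq_neg_iff_add_eq_zero.1 h
    have hbb : (2:F) * b = 0 := by rw [two_mul]; exact hsum
    rcases mul_eq_zero.1 hbb with h' | h'
    · exact h2 h'
    · exact hb0 h'
  have hcount : T.card = 2 * S.card := by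
    rw [Finset.card_eq_sum_card_fiberwise (f := fun x => x^2) (t := S)
      (fun x hx => by rw [hS]; exact Finset.mem_image_of_mem _ hx)]
    rw [Finset.sum_congr rfl hfib, Finset.sum_const, smul_eq_mul, mul_comm]
  have hSdesc : S = Finset.univ.filter (fun c => c ≠ 0 ∧ IsSquare c) := by
    ext a
    rw [hS, Finset.mem_image, Finset.mem_filter]
    constructor
    · rintro ⟨x, hx, rfl⟩
      rw [hT, Finset.mem_filter] at hx
      exact ⟨Finset.mem_univ _, pow_ne_zero _ hx.2, ⟨x, by ring⟩⟩
    · rintro ⟨-, ha0, r, rfl⟩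
      have hr : r ≠ 0 := fun h => ha0 (by rw [h, mul_zero])
      exact ⟨r, by rw [hT, Finset.mem_filter]; exact ⟨Finset.mem_univ _, hr⟩, by ring⟩
  have : Nat.card {c : F // c ≠ 0 ∧ IsSquare c} = S.card := by
    rw [Nat.card_eq_fintype_card, hSdesc, ← Fintype.card_subtype]
  omega

lemma char_ne_two (hq : Odd (Fintype.card F)) : ringChar F ≠ 2 := fun h => by
  have := FiniteField.even_card_iff_char_two.1 h
  have := Nat.odd_iff.1 hq
  omega

lemma two_ne_zeroF (hq : Odd (Fintype.card F)) : (2:F) ≠ 0 := Ring.two_ne_zero (char_ne_two hq)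

lemma not_dvd_X {P : F[X]} (hP : Irreducible P) (h0 : P.eval 0 ≠ 0) : ¬ P ∣ (X : F[X]) := by
  intro h
  obtain ⟨c, hc⟩ := h
  have hc0 : c ≠ 0 := by
    intro h'; rw [h', mul_zero] at hc; exact X_ne_zero hc
  have hdeg := natDegree_mul hP.ne_zero hc0
  rw [← hc, natDegree_X] at hdeg
  have hPd : 1 ≤ P.natDegree := hP.natDegree_pos
  have hcd : c.natDegree = 0 := by omega
  obtain ⟨γ, rfl⟩ : ∃ γ, c = C γ := ⟨c.coeff 0, eq_C_of_natDegree_eq_zero hcd⟩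
  have := congrArg (fun p => Polynomial.eval 0 p) hc
  simp only [eval_X, eval_mul, eval_C] at this
  rcases mul_eq_zero.1 this.symm with h' | h'
  · exact h0 h'
  · exact hc0 (by rw [h']; simp)

lemma root_ne_zero {P : F[X]} (hP : Irreducible P) (h0 : P.eval 0 ≠ 0) :
    AdjoinRoot.root P ≠ 0 := by
  haveI : Fact (Irreducible P) := ⟨hP⟩
  intro h
  apply h0
  have h5 := AdjoinRoot.eval₂_root P
  rw [h, eval₂_at_zero] at h5
  have h2 : P.coeff 0 = 0 := (AdjoinRoot.of P).injective (by rw [h5, map_zero])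
  rw [← coeff_zero_eq_eval_zero]
  exact h2

lemma aniso (hq : Odd (Fintype.card F)) {P : F[X]} (hP : Irreducible P) (hPm : P.Monic)
    (h0 : P.eval 0 ≠ 0) (hns : ¬ IsSquare (P.eval 0)) {a b : F[X]}
    (h : P ∣ a^2 + X*b^2) : P ∣ a ∧ P ∣ b := by
  haveI : Fact (Irreducible P) := ⟨hP⟩
  set π := AdjoinRoot.mk P with hπ
  have h1 : π a ^ 2 + (AdjoinRoot.root P) * π b ^ 2 = 0 := by
    have : π (a^2 + X*b^2) = 0 := by
      rw [hπ]
      show Ideal.Quotient.mk _ _ = 0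
      refine mk_eq_zero_iff.2 ?_
      exact h
    rw [map_add, map_mul, map_pow, map_pow] at this
    rw [← this, hπ]
    rfl
  have hb : π b = 0 := by
    by_contra hb
    apply hns
    rw [← isSquare_neg_root_iff hq hP hPm h0]
    refine ⟨π a / π b, ?_⟩
    field_simp
    linear_combination -h1
  constructor
  · have ha : π a = 0 := by
      rw [hb] at h1
      have : π a ^ 2 = 0 := by linear_combination h1
      exact pow_eq_zero_iff (by norm_num) |>.1 this
    rw [hπ] at ha
    exact mk_eq_zero_iff.1 ha
  · rw [hπ] at hb
    exact mk_eq_zero_iff.1 hb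

lemma unit_rep (hq : Odd (Fintype.card F)) {P : F[X]} (hP : Irreducible P) (hPm : P.Monic)
    (h0 : P.eval 0 ≠ 0) {f : F[X]} (hf : ¬ P ∣ f) (m : ℕ) :
    ∃ a b, P^m ∣ a^2 + X*b^2 - f := by
  classical
  haveI : Fact (Irreducible P) := ⟨hP⟩
  haveI : Fintype (AdjoinRoot P) := Module.fintypeOfFintype (AdjoinRoot.powerBasis' hPm).basis
  have hcardK : Fintype.card (AdjoinRoot P) = Fintype.card F ^ P.natDegree := by
    have h := Module.card_fintype (AdjoinRoot.powerBasis' hPm).basis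
    simpa using h
  have hoddK : Fintype.card (AdjoinRoot P) % 2 = 1 := by
    rw [hcardK]
    exact Nat.odd_iff.1 hq.pow
  have hX : ¬ P ∣ (X:F[X]) := not_dvd_X hP h0
  have hroot : AdjoinRoot.root P ≠ 0 := root_ne_zero hP h0
  set π := AdjoinRoot.mk P with hπ
  -- solve mod P
  have hf2 : ((X:(AdjoinRoot P)[X])^2).degree = 2 := degree_X_pow 2
  have hg2 : (C (AdjoinRoot.root P) * (X:(AdjoinRoot P)[X])^2 - C (π f)).degree = 2 := by
    have hd1 : (C (AdjoinRoot.root P) * (X:(AdjoinRoot P)[X])^2).degree = 2 := by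
      rw [degree_C_mul_X_pow _ hroot]
      rfl
    rw [sub_eq_add_neg, ← map_neg]
    rw [degree_add_C (by rw [hd1]; norm_num)]
    exact hd1
  obtain ⟨A, B, hAB⟩ := FiniteField.exists_root_sum_quadratic hf2 hg2 hoddK
  simp only [eval_pow, eval_X, eval_sub, eval_mul, eval_C] at hAB
  obtain ⟨a₀, rfl⟩ := AdjoinRoot.mk_surjective A
  obtain ⟨b₀, rfl⟩ := AdjoinRoot.mk_surjective B
  have h2 : P ∣ a₀^2 + X*b₀^2 - f := by
    have : π (a₀^2 + X*b₀^2 - f) = 0 := by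
      push_cast [map_sub, map_add, map_mul, map_pow]
      rw [show π X = AdjoinRoot.root P from rfl]
      linear_combination hAB
    rw [hπ] at this
    exact mk_eq_zero_iff.1 this
  have h2F : (2:F) ≠ 0 := two_ne_zeroF hq
  by_cases ha : P ∣ a₀
  · -- use b
    have h3 : P ∣ X*b₀^2 - f := by
      have h4 : P ∣ (a₀^2 + X*b₀^2 - f) - a₀^2 := dvd_sub h2 (by rw [sq]; exact Dvd.dvd.mul_right ha a₀)
      have h5 : (a₀^2 + X*b₀^2 - f) - a₀^2 = X*b₀^2 - f := by ring
      rwa [h5] at h4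
    have hb₀ : ¬ P ∣ b₀ := by
      intro hb
      apply hf
      have h6 : P ∣ X*b₀^2 := by
        rw [sq]
        exact Dvd.dvd.mul_left (Dvd.dvd.mul_right hb b₀) X
      have h7 : f = X*b₀^2 - (X*b₀^2 - f) := by ring
      rw [h7]
      exact dvd_sub h6 h3
    obtain ⟨γ, hγ, hdvd⟩ := hensel_sq hP h2F hX hb₀ h3 m
    exact ⟨0, γ, by
      have : (0:F[X])^2 + X*γ^2 - f = X*γ^2 - f := by ring
      rw [this]
      exact hdvd⟩
  · obtain ⟨γ, hγ, hdvd⟩ := hensel_sq hP h2F (by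
      intro h'
      exact hP.not_isUnit (isUnit_of_dvd_unit h' isUnit_one)) ha (by
      have h5 : (1:F[X]) * a₀^2 - (f - X*b₀^2) = a₀^2 + X*b₀^2 - f := by ring
      rw [h5]
      exact h2) m
    exact ⟨γ, b₀, by
      have h5 : (1:F[X]) * γ^2 - (f - X*b₀^2) = γ^2 + X*b₀^2 - f := by ring
      rw [h5] at hdvd
      exact hdvd⟩

lemma negX_sqrt (hq : Odd (Fintype.card F)) {P : F[X]} (hP : Irreducible P) (hPm : P.Monic)
    (h0 : P.eval 0 ≠ 0) (hsq : IsSquare (P.eval 0)) (m : ℕ) :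
    ∃ β, ¬ P ∣ β ∧ P^m ∣ β^2 + X := by
  haveI : Fact (Irreducible P) := ⟨hP⟩
  rw [← isSquare_neg_root_iff hq hP hPm h0] at hsq
  obtain ⟨B, hB⟩ := hsq
  obtain ⟨β₀, rfl⟩ := AdjoinRoot.mk_surjective B
  have hroot : AdjoinRoot.root P ≠ 0 := root_ne_zero hP h0
  have h1 : P ∣ β₀^2 + X := by
    have h2 : AdjoinRoot.mk P (β₀^2 + X) = 0 := by
      rw [map_add, map_pow]
      rw [show AdjoinRoot.mk P X = AdjoinRoot.root P from rfl]
      linear_combination -hB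
    exact mk_eq_zero_iff.1 h2
  have hβ₀ : ¬ P ∣ β₀ := by
    intro h
    have h3 : AdjoinRoot.mk P β₀ = 0 := mk_eq_zero_iff.2 h
    rw [h3, mul_zero] at hB
    exact hroot (by rw [← neg_eq_zero, hB])
  obtain ⟨γ, hγ, hdvd⟩ := hensel_sq hP (two_ne_zeroF hq) (by
    intro h'
    exact hP.not_isUnit (isUnit_of_dvd_unit h' isUnit_one)) hβ₀ (by
    have h5 : (1:F[X]) * β₀^2 - (-X) = β₀^2 + X := by ring
    rw [h5]
    exact h1) m
  refine ⟨γ, hγ, ?_⟩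
  have h5 : (1:F[X]) * γ^2 - (-X) = γ^2 + X := by ring
  rw [h5] at hdvd
  exact hdvd

lemma zero_mem_Aset (g : F[X]) : 0 ∈ Aset F g :=
  ⟨0, 0, by simp⟩

lemma card_Aset_unit {g : F[X]} (hg : IsUnit g) : Nat.card ↥(Aset F g) = 1 := by
  haveI : Subsingleton (F[X] ⧸ Ideal.span {g}) := by
    rw [Ideal.Quotient.subsingleton_iff, Ideal.span_singleton_eq_top]
    exact hg
  rw [Nat.card_eq_one_iff_unique]
  exact ⟨⟨fun a b => Subtype.ext (Subsingleton.elim _ _)⟩, ⟨⟨0, zero_mem_Aset g⟩⟩⟩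

lemma Aset_univ_case1 (hq : Odd (Fintype.card F)) {P : F[X]} (hP : Irreducible P)
    (hPm : P.Monic) (h0 : P.eval 0 ≠ 0) (hsq : IsSquare (P.eval 0)) (ν : ℕ) :
    Aset F (P^ν) = Set.univ := by
  obtain ⟨β, hβ, hdvd⟩ := negX_sqrt hq hP hPm h0 hsq ν
  ext x
  simp only [Set.mem_univ, iff_true]
  obtain ⟨f, rfl⟩ := Ideal.Quotient.mk_surjective x
  have hcop : IsCoprime (P^ν) β := (hP.coprime_iff_not_dvd.2 hβ).pow_left
  obtain ⟨u, v, huv⟩ := hcop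
  set π := Ideal.Quotient.mk (Ideal.span {P^ν}) with hπ
  refine ⟨C 2⁻¹ * (f + 1), C 2⁻¹ * v * (f - 1), ?_⟩
  have hPν0 : π (P^ν) = 0 := mk_eq_zero_iff.2 dvd_rfl
  have hXR : π X = -(π β)^2 := by
    have h1 : π (β^2 + X) = 0 := mk_eq_zero_iff.2 hdvd
    rw [map_add, map_pow] at h1
    exact eq_neg_of_add_eq_zero_right h1
  have hvβ : π v * π β = 1 := by
    have h2 := congrArg π huv
    rw [map_add, map_mul, map_mul, map_one, hPν0, mul_zero, zero_add] at h2
    exact h2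
  have hcR : π (C 2⁻¹) * 2 = 1 := by
    have hpoly : (C (2⁻¹:F) * 2 : F[X]) = 1 := by
      rw [← map_ofNat (C : F →+* F[X]) 2, ← map_mul, inv_mul_cancel₀ (two_ne_zeroF hq), map_one]
    have h3 := congrArg π hpoly
    rw [map_mul, map_one, map_ofNat] at h3
    exact h3
  simp only [map_add, map_mul, map_pow, map_one, map_sub]
  set a := π (C 2⁻¹)
  set V := π v
  set b' := π β
  set t := π f
  rw [hXR]
  linear_combination (a^2*(t-1)^2*(V*b'+1))*hvβ - (t*(2*a+1))*hcR

lemma count_zero (hq : Odd (Fintype.card F)) :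
    ∀ ν : ℕ, 2 * Nat.card ↥(Aset F ((X:F[X])^ν)) = Fintype.card F ^ ν + 1 := by
  intro ν
  induction ν with
  | zero =>
    rw [card_Aset_unit (by rw [pow_zero]; exact isUnit_one), pow_zero]
  | succ ν ih =>
    have hXmono : ((X:F[X])^(ν+1)).Monic := monic_X_pow _
    haveI hfin : Finite (F[X] ⧸ Ideal.span {(X:F[X])^(ν+1)}) := finite_quot hXmono
    haveI hfin1 : Finite (F[X] ⧸ Ideal.span {(X:F[X])}) := finite_quot monic_X
    set I : Ideal F[X] := Ideal.span {(X:F[X])^(ν+1)} with hI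
    set J : Ideal F[X] := Ideal.span {(X:F[X])} with hJ
    have hle : I ≤ J := by
      rw [hI, hJ]
      exact Ideal.span_singleton_le_span_singleton.2 (dvd_pow_self X (Nat.succ_ne_zero ν))
    set ρ := Ideal.Quotient.factor hle with hρdef
    have hρ : ∀ f : F[X], ρ (Ideal.Quotient.mk I f) = Ideal.Quotient.mk J f :=
      fun f => Ideal.Quotient.factor_mk hle f
    have hρs : Function.Surjective ρ := fun y => by
      obtain ⟨f, rfl⟩ := Ideal.Quotient.mk_surjective y
      exact ⟨Ideal.Quotient.mk I f, hρ f⟩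
    obtain ⟨ψ, hψ, hψinj⟩ := psi_exists (X:F[X]) X_ne_zero 1 ν (ν+1) (by omega)
    set S : Set (F[X] ⧸ J) := {y | y ≠ 0 ∧ IsSquare y} with hS
    have hA1 : Aset F ((X:F[X])^(ν+1)) ∩ {x | ρ x ≠ 0} = ρ ⁻¹' S := by
      ext x
      constructor
      · rintro ⟨⟨A, B, rfl⟩, hx0⟩
        have hxS : ρ (Ideal.Quotient.mk I (A^2 + X*B^2)) = (Ideal.Quotient.mk J A)^2 := by
          rw [hρ, map_add, map_mul, map_pow, map_pow,
            mk_eq_zero_iff.2 (dvd_refl (X:F[X])), zero_mul, add_zero]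
        exact ⟨hx0, ⟨Ideal.Quotient.mk J A, by rw [hxS]; ring⟩⟩
      · intro hx
        have hx0 : ρ x ≠ 0 := hx.1
        obtain ⟨y, hy⟩ := hx.2
        obtain ⟨f, rfl⟩ := Ideal.Quotient.mk_surjective x
        obtain ⟨s, rfl⟩ := Ideal.Quotient.mk_surjective y
        rw [hρ] at hy
        have hdvd1 : (X:F[X]) ∣ 1 * s^2 - f := by
          refine mk_eq_zero_iff.1 ?_
          rw [map_sub, map_mul, map_one, map_pow, one_mul, sq, ← hy, sub_self]
        have hs0 : ¬ (X:F[X]) ∣ s := by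
          intro h
          apply hx0
          rw [hρ, hy, mk_eq_zero_iff.2 h, mul_zero]
        obtain ⟨γ, hγ, hdγ⟩ := hensel_sq irreducible_X (two_ne_zeroF hq)
          (fun h => (Polynomial.not_isUnit_X (R := F)) (isUnit_of_dvd_unit h isUnit_one))
          hs0 hdvd1 (ν+1)
        refine ⟨⟨γ, 0, ?_⟩, hx0⟩
        rw [Ideal.Quotient.eq, Ideal.mem_span_singleton]
        have h8 : f - (γ^2 + X*0^2) = -(1*γ^2 - f) := by ring
        rw [h8]
        exact (dvd_neg).2 hdγ
    have hA2 : Aset F ((X:F[X])^(ν+1)) ∩ {x | ρ x = 0} = ψ '' (Aset F ((X:F[X])^ν)) := by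
      ext x
      constructor
      · rintro ⟨⟨A, B, rfl⟩, hx0⟩
        have h4 : Ideal.Quotient.mk J (A^2+X*B^2) = 0 := by rw [← hρ]; exact hx0
        have h5 : (X:F[X]) ∣ A^2 + X*B^2 := mk_eq_zero_iff.1 h4
        have h6 : (X:F[X]) ∣ A^2 := by
          have h7 : A^2 = (A^2 + X*B^2) - X*B^2 := by ring
          rw [h7]
          exact dvd_sub h5 (Dvd.intro _ rfl)
        obtain ⟨A₀, rfl⟩ := Prime.dvd_of_dvd_pow prime_X h6
        refine ⟨Ideal.Quotient.mk _ (B^2 + X*A₀^2), ⟨B, A₀, rfl⟩, ?_⟩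
        rw [hψ]
        congr 1
        ring
      · rintro ⟨y, hy, rfl⟩
        obtain ⟨A, B, rfl⟩ := hy
        constructor
        · refine ⟨X*B, A, ?_⟩
          rw [hψ]
          congr 1
          ring
        · show ρ _ = 0
          rw [hψ, hρ]
          exact mk_eq_zero_iff.2 ⟨X^0 * (A^2 + X*B^2), by ring⟩
    have hdisj : Disjoint (Aset F ((X:F[X])^(ν+1)) ∩ {x | ρ x ≠ 0})
        (Aset F ((X:F[X])^(ν+1)) ∩ {x | ρ x = 0}) := by
      rw [Set.disjoint_left]
      rintro x ⟨-, h1⟩ ⟨-, h2⟩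
      exact h1 h2
    have hsplit : Aset F ((X:F[X])^(ν+1)) = (Aset F ((X:F[X])^(ν+1)) ∩ {x | ρ x ≠ 0})
        ∪ (Aset F ((X:F[X])^(ν+1)) ∩ {x | ρ x = 0}) := by
      ext x
      constructor
      · intro hx
        by_cases h : ρ x = 0
        · exact Or.inr ⟨hx, h⟩
        · exact Or.inl ⟨hx, h⟩
      · rintro (⟨hx, -⟩ | ⟨hx, -⟩) <;> exact hx
    have hker : ρ ⁻¹' ({0} : Set (F[X] ⧸ J)) = Set.range ψ := by
      ext x
      constructor
      · intro hx
        obtain ⟨f, rfl⟩ := Ideal.Quotient.mk_surjective x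
        have h1 : (X:F[X]) ∣ f := mk_eq_zero_iff.1 (by rw [← hρ]; exact hx)
        obtain ⟨g, rfl⟩ := h1
        exact ⟨Ideal.Quotient.mk _ g, by rw [hψ, pow_one]⟩
      · rintro ⟨y, rfl⟩
        obtain ⟨g, rfl⟩ := Ideal.Quotient.mk_surjective y
        show ρ _ ∈ ({0} : Set (F[X] ⧸ J))
        rw [Set.mem_singleton_iff, hψ, hρ]
        exact mk_eq_zero_iff.2 ⟨X^0 * g, by ring⟩
    have hcard_ker : Nat.card (ρ ⁻¹' ({0} : Set (F[X] ⧸ J))) = Fintype.card F ^ ν := by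
      rw [hker, Nat.card_range_of_injective hψinj, card_quot (monic_X_pow ν), natDegree_X_pow]
    have hspan0 : J = Ideal.span {(X:F[X]) - C (0:F)} := by rw [hJ, map_zero, sub_zero]
    set e : (F[X] ⧸ J) ≃+* F :=
      (Ideal.quotEquivOfEq hspan0).trans (quotientSpanXSubCAlgEquiv (0:F)).toRingEquiv with he
    have hScard : Nat.card ↥S = Nat.card {c : F // c ≠ 0 ∧ IsSquare c} := by
      refine Nat.card_congr (Equiv.subtypeEquiv e.toEquiv ?_)
      intro y
      show (y ≠ 0 ∧ IsSquare y) ↔ (e y ≠ 0 ∧ IsSquare (e y))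
      constructor
      · rintro ⟨h1, h2⟩
        refine ⟨fun h => h1 ?_, h2.map e⟩
        have h9 := congrArg e.symm h
        rw [RingEquiv.symm_apply_apply, map_zero] at h9
        exact h9
      · rintro ⟨h1, h2⟩
        refine ⟨fun h => h1 (by rw [h, map_zero]), ?_⟩
        have h9 := h2.map e.symm
        rwa [RingEquiv.symm_apply_apply] at h9
    have hρadd : ⇑ρ.toAddMonoidHom = ⇑ρ := rfl
    have hc1 : Nat.card ↥(ρ ⁻¹' S) = Nat.card ↥S * Fintype.card F ^ ν := by
      rw [← hcard_ker]
      have h10 := card_preimage ρ.toAddMonoidHom (by rw [hρadd]; exact hρs) S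
      rw [hρadd] at h10
      exact h10
    have hc2 : Nat.card ↥(ψ '' (Aset F ((X:F[X])^ν))) = Nat.card ↥(Aset F ((X:F[X])^ν)) :=
      Nat.card_image_of_injective hψinj _
    have htot : Nat.card ↥(Aset F ((X:F[X])^(ν+1)))
        = Nat.card ↥S * Fintype.card F ^ ν + Nat.card ↥(Aset F ((X:F[X])^ν)) := by
      conv_lhs => rw [hsplit]
      rw [Nat.card_coe_set_eq, Set.ncard_union_eq hdisj (Set.toFinite _) (Set.toFinite _),
        ← Nat.card_coe_set_eq, ← Nat.card_coe_set_eq, hA1, hA2, hc1, hc2]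
    have hq1 : 1 ≤ Fintype.card F := Fintype.card_pos
    have hScard2 : 2 * Nat.card ↥S = Fintype.card F - 1 := by
      rw [hScard]
      exact card_nonzero_squares hq
    have hpow : (Fintype.card F - 1) * Fintype.card F ^ ν + Fintype.card F ^ ν
        = Fintype.card F ^ (ν+1) := by
      have h11 : (Fintype.card F - 1) + 1 = Fintype.card F := Nat.sub_add_cancel hq1
      calc (Fintype.card F - 1) * Fintype.card F ^ ν + Fintype.card F ^ ν
          = ((Fintype.card F - 1) + 1) * Fintype.card F ^ ν := by ring
        _ = Fintype.card F * Fintype.card F ^ ν := by rw [h11]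
        _ = Fintype.card F ^ (ν+1) := by rw [pow_succ]; ring
    calc 2 * Nat.card ↥(Aset F ((X:F[X])^(ν+1)))
        = (2 * Nat.card ↥S) * Fintype.card F ^ ν + 2 * Nat.card ↥(Aset F ((X:F[X])^ν)) := by
          rw [htot]; ring
      _ = (Fintype.card F - 1) * Fintype.card F ^ ν + (Fintype.card F ^ ν + 1) := by
          rw [hScard2, ih]
      _ = Fintype.card F ^ (ν+1) + 1 := by rw [← add_assoc, hpow]

lemma count_neg (hq : Odd (Fintype.card F)) {P : F[X]} (hP : Irreducible P) (hPm : P.Monic)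
    (h0 : P.eval 0 ≠ 0) (hns : ¬ IsSquare (P.eval 0)) :
    ∀ ν : ℕ, (Nat.card ↥(Aset F (P^ν)) : ℤ) * ((Fintype.card F : ℤ) ^ P.natDegree + 1)
      = ((Fintype.card F : ℤ) ^ P.natDegree) ^ (ν+1)
        + (if Odd ν then (Fintype.card F : ℤ) ^ P.natDegree else 1) := by
  have hP0 : P ≠ 0 := hP.ne_zero
  intro ν
  induction ν using Nat.strong_induction_on with
  | _ ν ih =>
    rcases ν with _ | ν
    · rw [card_Aset_unit (by rw [pow_zero]; exact isUnit_one)]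
      simp
    rcases ν with _ | ν
    · -- ν = 1 : Aset = univ
      have huniv : Aset F (P^1) = Set.univ := by
        ext x
        simp only [Set.mem_univ, iff_true]
        obtain ⟨f, rfl⟩ := Ideal.Quotient.mk_surjective x
        by_cases hf : P ∣ f
        · refine ⟨0, 0, ?_⟩
          rw [Ideal.Quotient.eq, Ideal.mem_span_singleton]
          have h1 : f - (0^2 + X*0^2) = f := by ring
          rw [h1, pow_one]
          exact hf
        · obtain ⟨a, b, hab⟩ := unit_rep hq hP hPm h0 hf 1
          refine ⟨a, b, ?_⟩
          rw [Ideal.Quotient.eq, Ideal.mem_span_singleton]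
          have h1 : f - (a^2 + X*b^2) = -(a^2 + X*b^2 - f) := by ring
          rw [h1]
          exact dvd_neg.2 hab
      have hcard : Nat.card ↥(Aset F (P^1)) = Fintype.card F ^ P.natDegree := by
        rw [huniv, Nat.card_congr (Equiv.Set.univ _), card_quot (hPm.pow 1), natDegree_pow]
        ring_nf
      rw [hcard]
      have hodd1 : Odd 1 := odd_one
      rw [if_pos hodd1]
      push_cast
      ring
    · -- step : ν + 2
      have ihν := ih ν (by omega)
      set q := Fintype.card F with hqdef
      set d := P.natDegree with hddef
      have hmono : (P^(ν+2)).Monic := hPm.pow _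
      haveI hfin : Finite (F[X] ⧸ Ideal.span {P^(ν+2)}) := finite_quot hmono
      haveI hfin1 : Finite (F[X] ⧸ Ideal.span {P}) := finite_quot hPm
      set I : Ideal F[X] := Ideal.span {P^(ν+2)} with hI
      set J : Ideal F[X] := Ideal.span {P} with hJ
      have hle : I ≤ J := by
        rw [hI, hJ]
        exact Ideal.span_singleton_le_span_singleton.2 (dvd_pow_self P (by omega))
      set ρ := Ideal.Quotient.factor hle with hρdef
      have hρ : ∀ f : F[X], ρ (Ideal.Quotient.mk I f) = Ideal.Quotient.mk J f :=
        fun f => Ideal.Quotient.factor_mk hle f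
      have hρs : Function.Surjective ρ := fun y => by
        obtain ⟨f, rfl⟩ := Ideal.Quotient.mk_surjective y
        exact ⟨Ideal.Quotient.mk I f, hρ f⟩
      obtain ⟨ψ, hψ, hψinj⟩ := psi_exists P hP0 2 ν (ν+2) (by omega)
      obtain ⟨ψ1, hψ1, hψ1inj⟩ := psi_exists P hP0 1 (ν+1) (ν+2) (by omega)
      have hA1 : Aset F (P^(ν+2)) ∩ {x | ρ x ≠ 0} = {x | ρ x ≠ 0} := by
        refine Set.inter_eq_right.2 ?_
        intro x hx
        obtain ⟨f, rfl⟩ := Ideal.Quotient.mk_surjective x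
        have hf : ¬ P ∣ f := by
          intro h
          apply hx
          rw [hρ]
          exact mk_eq_zero_iff.2 h
        obtain ⟨a, b, hab⟩ := unit_rep hq hP hPm h0 hf (ν+2)
        refine ⟨a, b, ?_⟩
        rw [Ideal.Quotient.eq, Ideal.mem_span_singleton]
        have h1 : f - (a^2 + X*b^2) = -(a^2 + X*b^2 - f) := by ring
        rw [h1]
        exact dvd_neg.2 hab
      have hA2 : Aset F (P^(ν+2)) ∩ {x | ρ x = 0} = ψ '' (Aset F (P^ν)) := by
        ext x
        constructor
        · rintro ⟨⟨A, B, rfl⟩, hx0⟩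
          have h4 : P ∣ A^2 + X*B^2 := by
            refine mk_eq_zero_iff.1 ?_
            rw [← hρ]
            exact hx0
          obtain ⟨hA, hB⟩ := aniso hq hP hPm h0 hns h4
          obtain ⟨A₀, rfl⟩ := hA
          obtain ⟨B₀, rfl⟩ := hB
          refine ⟨Ideal.Quotient.mk _ (A₀^2 + X*B₀^2), ⟨A₀, B₀, rfl⟩, ?_⟩
          rw [hψ]
          congr 1
          ring
        · rintro ⟨y, hy, rfl⟩
          obtain ⟨A, B, rfl⟩ := hy
          constructor
          · refine ⟨P*A, P*B, ?_⟩
            rw [hψ]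
            congr 1
            ring
          · show ρ _ = 0
            rw [hψ, hρ]
            exact mk_eq_zero_iff.2 ⟨P*(A^2+X*B^2), by ring⟩
      have hdisj : Disjoint (Aset F (P^(ν+2)) ∩ {x | ρ x ≠ 0})
          (Aset F (P^(ν+2)) ∩ {x | ρ x = 0}) := by
        rw [Set.disjoint_left]
        rintro x ⟨-, h1⟩ ⟨-, h2⟩
        exact h1 h2
      have hsplit : Aset F (P^(ν+2)) = (Aset F (P^(ν+2)) ∩ {x | ρ x ≠ 0})
          ∪ (Aset F (P^(ν+2)) ∩ {x | ρ x = 0}) := by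
        ext x
        constructor
        · intro hx
          by_cases h : ρ x = 0
          · exact Or.inr ⟨hx, h⟩
          · exact Or.inl ⟨hx, h⟩
        · rintro (⟨hx, -⟩ | ⟨hx, -⟩) <;> exact hx
      have hker : ρ ⁻¹' ({0} : Set (F[X] ⧸ J)) = Set.range ψ1 := by
        ext x
        constructor
        · intro hx
          obtain ⟨f, rfl⟩ := Ideal.Quotient.mk_surjective x
          have h1 : P ∣ f := mk_eq_zero_iff.1 (by rw [← hρ]; exact hx)
          obtain ⟨g, rfl⟩ := h1
          exact ⟨Ideal.Quotient.mk _ g, by rw [hψ1, pow_one]⟩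
        · rintro ⟨y, rfl⟩
          obtain ⟨g, rfl⟩ := Ideal.Quotient.mk_surjective y
          show ρ _ ∈ ({0} : Set (F[X] ⧸ J))
          rw [Set.mem_singleton_iff, hψ1, hρ]
          exact mk_eq_zero_iff.2 ⟨P^0*g, by ring⟩
      have hcard_ker : Nat.card (ρ ⁻¹' ({0} : Set (F[X] ⧸ J))) = q ^ (d*(ν+1)) := by
        rw [hker, Nat.card_range_of_injective hψ1inj, card_quot (hPm.pow (ν+1)), natDegree_pow]
        ring_nf
        rfl
      -- card of nonzero part
      classical
      haveI : Fintype (F[X] ⧸ J) := Fintype.ofFinite _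
      have hcard1 : Nat.card (F[X] ⧸ J) = q ^ d := card_quot hPm
      set Sc : Set (F[X] ⧸ J) := {y | y ≠ 0} with hSc
      have hcardSc : (Nat.card ↥Sc : ℤ) = (q:ℤ)^d - 1 := by
        have h1 : Nat.card ↥Sc = Fintype.card {y : F[X] ⧸ J // ¬ y = 0} :=
          Nat.card_eq_fintype_card
        rw [h1, Fintype.card_subtype_compl, Fintype.card_subtype_eq]
        have h2 : 1 ≤ Fintype.card (F[X] ⧸ J) := Fintype.card_pos
        have h3 : Fintype.card (F[X] ⧸ J) = q ^ d := by
          rw [← Nat.card_eq_fintype_card, hcard1]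
        rw [h3] at h2 ⊢
        push_cast [h2]
        ring
      have hpre : {x | ρ x ≠ 0} = ρ ⁻¹' Sc := rfl
      have hρadd : ⇑ρ.toAddMonoidHom = ⇑ρ := rfl
      have hc1 : Nat.card ↥{x | ρ x ≠ 0} = Nat.card ↥Sc * q ^ (d*(ν+1)) := by
        rw [hpre, ← hcard_ker]
        have h10 := card_preimage ρ.toAddMonoidHom (by rw [hρadd]; exact hρs) Sc
        rw [hρadd] at h10
        exact h10
      have hc2 : Nat.card ↥(ψ '' (Aset F (P^ν))) = Nat.card ↥(Aset F (P^ν)) :=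
        Nat.card_image_of_injective hψinj _
      have htot : Nat.card ↥(Aset F (P^(ν+2)))
          = Nat.card ↥Sc * q ^ (d*(ν+1)) + Nat.card ↥(Aset F (P^ν)) := by
        conv_lhs => rw [hsplit]
        rw [Nat.card_coe_set_eq, Set.ncard_union_eq hdisj (Set.toFinite _) (Set.toFinite _),
          ← Nat.card_coe_set_eq, ← Nat.card_coe_set_eq, hA1, hA2, hc1, hc2]
      have hoddiff : Odd (ν+2) ↔ Odd ν := by
        rw [Nat.odd_iff, Nat.odd_iff]
        omega
      rw [htot]
      push_cast
      rw [hcardSc]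
      by_cases hodd : Odd ν
      · rw [if_pos (hoddiff.2 hodd)]
        rw [if_pos hodd] at ihν
        have hQ : ((q:ℤ)^d)^(ν+1) = (q:ℤ)^(d*(ν+1)) := by rw [← pow_mul]
        linear_combination ihν + (((q:ℤ)^d)^2 - 1) * hQ
      · rw [if_neg (fun h => hodd (hoddiff.1 h))]
        rw [if_neg hodd] at ihν
        have hQ : ((q:ℤ)^d)^(ν+1) = (q:ℤ)^(d*(ν+1)) := by rw [← pow_mul]
        linear_combination ihν + (((q:ℤ)^d)^2 - 1) * hQ


end CardAsetAux

/-- **Lemma (cardinality of `𝒜_q(P^ν)`).**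
Let `P` be monic irreducible and `ν ≥ 1`. If `χ_q(P) = −1` then
`#𝒜_q(P^ν) = |P|^ν(1 − 1/(|P|+1)) + |P|/(|P|+1)` for `ν` odd and
`= |P|^ν(1 − 1/(|P|+1)) + 1/(|P|+1)` for `ν` even; if `χ_q(P) = 0` then
`#𝒜_q(P^ν) = (|P|^ν + 1)/2`; if `χ_q(P) = 1` then `#𝒜_q(P^ν) = |P|^ν`. -/
theorem card_Aset (F : Type) [Field F] [Fintype F] (hF : Odd (Fintype.card F))
    (P : F[X]) (hPm : P.Monic) (hPi : Irreducible P) (ν : ℕ) (hν : 1 ≤ ν) :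
    (chiq F P = -1 →
      (Odd ν → (Nat.card ↥(Aset F (P ^ ν)) : ℝ) =
        absP F P ^ ν * (1 - 1 / (absP F P + 1)) + absP F P / (absP F P + 1)) ∧
      (Even ν → (Nat.card ↥(Aset F (P ^ ν)) : ℝ) =
        absP F P ^ ν * (1 - 1 / (absP F P + 1)) + 1 / (absP F P + 1))) ∧
    (chiq F P = 0 →
      (Nat.card ↥(Aset F (P ^ ν)) : ℝ) = (absP F P ^ ν + 1) / 2) ∧
    (chiq F P = 1 →
      (Nat.card ↥(Aset F (P ^ ν)) : ℝ) = absP F P ^ ν) := by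
  open CardAsetAux in
  refine ⟨?_, ?_, ?_⟩
  · intro hchi
    have h0 : P.eval 0 ≠ 0 := by
      intro h
      simp only [chiq, if_pos h] at hchi
      norm_num at hchi
    have hns : ¬ IsSquare (P.eval 0) := by
      intro h
      simp only [chiq, if_neg h0, if_pos h] at hchi
      norm_num at hchi
    have hcn := count_neg hF hPi hPm h0 hns ν
    have hQdef : absP F P = (Fintype.card F : ℝ) ^ P.natDegree := rfl
    have hq1 : (1:ℝ) ≤ (Fintype.card F : ℝ) := by exact_mod_cast Fintype.card_pos
    have hQpos : (0:ℝ) < (Fintype.card F : ℝ) ^ P.natDegree := by positivity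
    have hQne : ((Fintype.card F : ℝ) ^ P.natDegree) + 1 ≠ 0 := by positivity
    constructor
    · intro hodd
      rw [if_pos hodd] at hcn
      have hR : (Nat.card ↥(Aset F (P^ν)) : ℝ) * ((Fintype.card F:ℝ)^P.natDegree + 1)
          = ((Fintype.card F:ℝ)^P.natDegree)^(ν+1) + (Fintype.card F:ℝ)^P.natDegree := by
        exact_mod_cast congrArg (fun z : ℤ => (z : ℝ)) hcn
      rw [hQdef]
      field_simp
      linear_combination hR
    · intro heven
      have hnodd : ¬ Odd ν := Nat.not_odd_iff_even.2 heven
      rw [if_neg hnodd] at hcn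
      have hR : (Nat.card ↥(Aset F (P^ν)) : ℝ) * ((Fintype.card F:ℝ)^P.natDegree + 1)
          = ((Fintype.card F:ℝ)^P.natDegree)^(ν+1) + 1 := by
        exact_mod_cast congrArg (fun z : ℤ => (z : ℝ)) hcn
      rw [hQdef]
      field_simp
      linear_combination hR
  · intro hchi
    have h0 : P.eval 0 = 0 := by
      by_contra h
      by_cases h2 : IsSquare (P.eval 0)
      · simp only [chiq, if_neg h, if_pos h2] at hchi
        norm_num at hchi
      · simp only [chiq, if_neg h, if_neg h2] at hchi
        norm_num at hchi
    have hPX : P = X := by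
      have hX : (X:F[X]) ∣ P := X_dvd_iff.2 (by rwa [coeff_zero_eq_eval_zero])
      obtain ⟨c, hc⟩ := hX
      rcases hPi.isUnit_or_isUnit hc with h | h
      · exact absurd h Polynomial.not_isUnit_X
      · obtain ⟨γ, hγu, hγ⟩ := Polynomial.isUnit_iff.1 h
        have hm : (X * c).Monic := hc ▸ hPm
        rw [← hγ] at hm hc
        have hlc : (X * C γ).leadingCoeff = γ := by
          rw [leadingCoeff_mul, leadingCoeff_X, leadingCoeff_C, one_mul]
        have hγ1 : γ = 1 := by rw [← hlc]; exact hm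
        rw [hc, hγ1, map_one, mul_one]
    subst hPX
    have hcz := count_zero hF ν
    have hcast : (Nat.card ↥(Aset F ((X:F[X])^ν)) : ℝ) * 2 = (Fintype.card F : ℝ)^ν + 1 := by
      have := congrArg (fun n : ℕ => (n : ℝ)) hcz
      push_cast at this
      linarith
    have habs : absP F (X : F[X]) = (Fintype.card F : ℝ) := by
      show (Fintype.card F : ℝ) ^ (X : F[X]).natDegree = _
      rw [natDegree_X, pow_one]
    rw [habs]
    linarith
  · intro hchi
    have h0 : P.eval 0 ≠ 0 := by
      intro h
      simp only [chiq, if_pos h] at hchi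
      norm_num at hchi
    have hsq : IsSquare (P.eval 0) := by
      by_contra h
      simp only [chiq, if_neg h0, if_neg h] at hchi
      norm_num at hchi
    have huniv := Aset_univ_case1 hF hPi hPm h0 hsq ν
    have hcard : Nat.card ↥(Aset F (P^ν)) = Fintype.card F ^ (P.natDegree * ν) := by
      rw [huniv, Nat.card_congr (Equiv.Set.univ _), card_quot (hPm.pow ν), natDegree_pow]
      ring_nf
    rw [hcard]
    have habs : absP F P = (Fintype.card F : ℝ) ^ P.natDegree := rfl
    rw [habs]
    push_cast
    rw [pow_mul]
end

section
/- Let (G_i)_{i∈I} be a family of finite groups indexed by a finite set I, let G = ∏_{i∈I} G_i, let H ≤ G a subgroup, and let π_i : G → G_i be the projections. If H·M(G) = G and π_i(H) = G_i for all i ∈ I, then H = G. -/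
noncomputable section

/-- A maximal normal subgroup: a proper normal subgroup maximal among proper normal
subgroups. -/
def IsMaximalNormal {G : Type*} [Group G] (N : Subgroup G) : Prop :=
  N.Normal ∧ N ≠ ⊤ ∧ ∀ N' : Subgroup G, N'.Normal → N < N' → N' = ⊤

/-- The Melnikov subgroup `M(G)`: the intersection of all maximal normal subgroups of
`G` (equal to `G` itself when there are none, i.e. when `G` is trivial). -/
def melnikov (G : Type*) [Group G] : Subgroup G :=
  sInf {N : Subgroup G | IsMaximalNormal N}

end

section Lemmas

open Subgroup Function

theorem melnikov_le_of_max {G : Type*} [Group G] {N : Subgroup G}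
    (h : IsMaximalNormal N) : melnikov G ≤ N :=
  sInf_le h

theorem melnikov_normal (G : Type*) [Group G] : (melnikov G).Normal := by
  constructor
  intro n hn g
  rw [melnikov, Subgroup.mem_sInf] at hn ⊢
  intro N hN
  exact hN.1.conj_mem n (hn N hN) g

theorem comap_isMaximalNormal {G Q : Type*} [Group G] [Group Q] (f : G →* Q)
    (hf : Function.Surjective f) {N : Subgroup Q} (h : IsMaximalNormal N) :
    IsMaximalNormal (N.comap f) := by
  obtain ⟨hnorm, hne, hmax⟩ := h
  refine ⟨hnorm.comap f, ?_, ?_⟩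
  · intro hc
    apply hne
    rw [eq_top_iff]
    intro x _
    obtain ⟨y, rfl⟩ := hf x
    exact (hc ▸ Subgroup.mem_top y : y ∈ N.comap f)
  · intro N' hN' hlt
    have hker : f.ker ≤ N' := by
      refine le_trans ?_ hlt.le
      intro x hx
      simp only [MonoidHom.mem_ker] at hx
      simp [Subgroup.mem_comap, hx, N.one_mem]
    have hmapnorm : (N'.map f).Normal := hN'.map f hf
    have h1 : N ≤ N'.map f := by
      conv_lhs => rw [← Subgroup.map_comap_eq_self_of_surjective hf N]
      exact Subgroup.map_mono hlt.le
    have h2 : N ≠ N'.map f := by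
      intro he
      have hc := congrArg (Subgroup.comap f) he
      rw [Subgroup.comap_map_eq, sup_of_le_left hker] at hc
      exact hlt.ne hc
    have htop := hmax (N'.map f) hmapnorm (lt_of_le_of_ne h1 h2)
    have : N' ⊔ f.ker = ⊤ := by
      rw [← Subgroup.comap_map_eq, htop, Subgroup.comap_top]
    rwa [sup_of_le_left hker] at this

theorem melnikov_le_comap {G Q : Type*} [Group G] [Group Q] (f : G →* Q)
    (hf : Function.Surjective f) : melnikov G ≤ (melnikov Q).comap f := by
  intro x hx
  rw [Subgroup.mem_comap, melnikov, Subgroup.mem_sInf]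
  intro N hN
  exact (melnikov_le_of_max (comap_isMaximalNormal f hf hN)) hx

theorem melnikov_map_le {G Q : Type*} [Group G] [Group Q] (f : G →* Q)
    (hf : Function.Surjective f) : (melnikov G).map f ≤ melnikov Q :=
  Subgroup.map_le_iff_le_comap.mpr (melnikov_le_comap f hf)

theorem exists_isMaximalNormal (G : Type*) [Group G] [Finite G] [Nontrivial G] :
    ∃ N : Subgroup G, IsMaximalNormal N := by
  have : Finite (Subgroup G) := inferInstance
  have hne : ((⊥ : Subgroup G)) ∈ {N : Subgroup G | N.Normal ∧ N ≠ ⊤} :=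
    ⟨inferInstance, bot_ne_top⟩
  obtain ⟨N, hN, hmax⟩ := Set.Finite.exists_maximalFor id _ (Set.toFinite _) ⟨⊥, hne⟩
  refine ⟨N, hN.1, hN.2, fun N' hN' hlt => ?_⟩
  by_contra hne'
  exact (lt_irrefl N) (lt_of_lt_of_le hlt (hmax (j := N') ⟨hN', hne'⟩ hlt.le))

end Lemmas

section Main

open Subgroup Function Pointwise

universe u v

theorem aux_melnikov_fill :
    ∀ (n : ℕ) {I : Type u} [Finite I] (G : I → Type v)
      [∀ i, Group (G i)] [∀ i, Finite (G i)] (H : Subgroup (∀ i, G i)),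
      Nat.card (∀ i, G i) ≤ n →
      H ⊔ melnikov (∀ i, G i) = ⊤ →
      (∀ i, H.map (Pi.evalMonoidHom G i) = ⊤) →
      H = ⊤ := by
  intro n
  induction n using Nat.strong_induction_on with
  | _ n IH =>
    intro I _ G _ _ H hcard h1 h2
    classical
    -- the key quotient step
    have key : ∀ (i : I) (K : Subgroup (G i)), K.Normal → K ≠ ⊥ →
        H ⊔ K.map (MonoidHom.mulSingle G i) = ⊤ := by
      intro i K hKn hKbot
      set N : ∀ j, Subgroup (G j) := Function.update (fun j => (⊥ : Subgroup (G j))) i K with hN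
      have hNi : N i = K := by rw [hN]; simp
      have hNj : ∀ j, j ≠ i → N j = ⊥ := fun j hj => by rw [hN]; simp [Function.update_of_ne hj]
      haveI hNnorm : ∀ j, (N j).Normal := by
        intro j
        rcases eq_or_ne j i with rfl | hj
        · rw [hNi]; exact hKn
        · rw [hNj j hj]; infer_instance
      set φ : (∀ j, G j) →* (∀ j, G j ⧸ N j) :=
        Pi.monoidHom (fun j => (QuotientGroup.mk' (N j)).comp (Pi.evalMonoidHom G j)) with hφ
      have hφ_apply : ∀ (g : ∀ j, G j) (j : I), φ g j = QuotientGroup.mk' (N j) (g j) :=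
        fun g j => rfl
      have hφsurj : Function.Surjective φ := by
        intro q
        refine ⟨fun j => (q j).out, ?_⟩
        funext j
        rw [hφ_apply]
        exact (QuotientGroup.mk'_apply _ _).trans (Quotient.out_eq (q j))
      have hker : φ.ker = K.map (MonoidHom.mulSingle G i) := by
        ext g
        constructor
        · intro hg
          have hg' : ∀ j, g j ∈ N j := by
            intro j
            have := congrFun (MonoidHom.mem_ker.mp hg) j
            rw [hφ_apply] at this
            exact (QuotientGroup.eq_one_iff (g j)).mp this
          have hgi : g i ∈ K := hNi ▸ hg' i
          refine ⟨g i, hgi, ?_⟩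
          funext j
          rcases eq_or_ne j i with rfl | hj
          · simp
          · have : g j ∈ (⊥ : Subgroup (G j)) := hNj j hj ▸ hg' j
            simp [Subgroup.mem_bot] at this
            simp [MonoidHom.mulSingle_apply, Pi.mulSingle, Function.update_of_ne hj, this]
        · rintro ⟨k, hk, rfl⟩
          rw [MonoidHom.mem_ker]
          funext j
          rw [hφ_apply, Pi.one_apply]
          rw [QuotientGroup.mk'_apply]
          rw [QuotientGroup.eq_one_iff]
          rcases eq_or_ne j i with rfl | hj
          · rw [hNi]; simpa using hk
          · rw [hNj j hj]
            simp [MonoidHom.mulSingle_apply, Pi.mulSingle, Function.update_of_ne hj]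
      -- cardinality decreases
      have hqcard : ∀ j, Nat.card (G j ⧸ N j) * Nat.card (N j) = Nat.card (G j) :=
        fun j => (Subgroup.card_eq_card_quotient_mul_card_subgroup (N j)).symm
      have hpos : ∀ j, 0 < Nat.card (G j) := fun j => Nat.card_pos
      have hqle : ∀ j, j ≠ i → Nat.card (G j ⧸ N j) = Nat.card (G j) := by
        intro j hj
        have hone : Nat.card (N j) = 1 := by rw [hNj j hj]; exact Subgroup.card_bot
        have := hqcard j
        rw [hone, mul_one] at this
        exact this
      have hqlt : Nat.card (G i ⧸ N i) < Nat.card (G i) := by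
        have h2K : 2 ≤ Nat.card (N i) := by
          rw [hNi]
          exact (Subgroup.one_lt_card_iff_ne_bot K).mpr hKbot
        have hq := hqcard i
        have hqpos : 0 < Nat.card (G i ⧸ N i) := Nat.card_pos
        calc Nat.card (G i ⧸ N i) < Nat.card (G i ⧸ N i) * 2 := by omega
          _ ≤ Nat.card (G i ⧸ N i) * Nat.card (N i) := Nat.mul_le_mul_left _ h2K
          _ = Nat.card (G i) := hq
      haveI : Fintype I := Fintype.ofFinite I
      have hcard' : Nat.card (∀ j, G j ⧸ N j) < Nat.card (∀ j, G j) := by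
        rw [Nat.card_pi, Nat.card_pi]
        rw [← Finset.mul_prod_erase Finset.univ _ (Finset.mem_univ i),
          ← Finset.mul_prod_erase Finset.univ (fun j => Nat.card (G j)) (Finset.mem_univ i)]
        have heq : ∀ j ∈ Finset.univ.erase i,
            Nat.card (G j ⧸ N j) = Nat.card (G j) := by
          intro j hj
          exact hqle j (Finset.mem_erase.mp hj).1
        rw [Finset.prod_congr rfl heq]
        have hPpos : 0 < ∏ j ∈ Finset.univ.erase i, Nat.card (G j) :=
          Finset.prod_pos fun j _ => hpos j
        exact Nat.mul_lt_mul_of_lt_of_le hqlt le_rfl hPpos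
      -- transfer hypotheses
      have h1' : H.map φ ⊔ melnikov (∀ j, G j ⧸ N j) = ⊤ := by
        have := congrArg (Subgroup.map φ) h1
        rw [Subgroup.map_sup, ← MonoidHom.range_eq_map, MonoidHom.range_eq_top.mpr hφsurj] at this
        rw [eq_top_iff, ← this]
        exact sup_le (le_sup_left)
          (le_trans (melnikov_map_le φ hφsurj) le_sup_right)
      have h2' : ∀ j, (H.map φ).map (Pi.evalMonoidHom (fun j => G j ⧸ N j) j) = ⊤ := by
        intro j
        rw [Subgroup.map_map]
        have hcomp : (Pi.evalMonoidHom (fun j => G j ⧸ N j) j).comp φ =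
            (QuotientGroup.mk' (N j)).comp (Pi.evalMonoidHom G j) := rfl
        rw [hcomp, ← Subgroup.map_map, h2 j]
        rw [← MonoidHom.range_eq_map, MonoidHom.range_eq_top]
        exact QuotientGroup.mk'_surjective (N j)
      have htop := IH (Nat.card (∀ j, G j ⧸ N j)) (lt_of_lt_of_le hcard' hcard)
        (fun j => G j ⧸ N j) (H.map φ) le_rfl h1' h2'
      have := congrArg (Subgroup.comap φ) htop
      rw [Subgroup.comap_map_eq, Subgroup.comap_top, hker] at this
      exact this
    by_cases hc : ∀ i, H.comap (MonoidHom.mulSingle G i) = ⊥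
    · by_cases hm : ∀ i, melnikov (G i) = ⊥
      · -- the Melnikov subgroup of the product is trivial
        have hmel : melnikov (∀ j, G j) = ⊥ := by
          rw [eq_bot_iff]
          intro x hx
          rw [Subgroup.mem_bot]
          funext i
          have hsurj : Function.Surjective (Pi.evalMonoidHom G i) := by
            intro y; exact ⟨Pi.mulSingle i y, by simp⟩
          have hxi := melnikov_le_comap (Pi.evalMonoidHom G i) hsurj hx
          rw [Subgroup.mem_comap, hm i, Subgroup.mem_bot] at hxi
          exact hxi
        rw [hmel, sup_bot_eq] at h1
        exact h1
      · -- some factor has nontrivial Melnikov subgroup: contradiction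
        exfalso
        push_neg at hm
        obtain ⟨i, hi⟩ := hm
        have hKn : (melnikov (G i)).Normal := melnikov_normal (G i)
        have hsup := key i (melnikov (G i)) hKn hi
        set Khat := (melnikov (G i)).map (MonoidHom.mulSingle G i) with hKhat
        haveI hKhatnorm : Khat.Normal := by
          constructor
          rintro x hxK g
          obtain ⟨k, hk, rfl⟩ := Subgroup.mem_map.mp hxK
          refine Subgroup.mem_map.mpr ⟨g i * k * (g i)⁻¹, hKn.conj_mem k hk (g i), ?_⟩
          funext j
          rcases eq_or_ne j i with rfl | hj
          · simp
          · simp [MonoidHom.mulSingle_apply, Pi.mulSingle, Function.update_of_ne hj]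
        have hdisj : H ⊓ Khat = ⊥ := by
          rw [eq_bot_iff]
          intro x hx
          obtain ⟨hxH, hxK⟩ := hx
          obtain ⟨k, hk, rfl⟩ := Subgroup.mem_map.mp hxK
          have hmem : k ∈ H.comap (MonoidHom.mulSingle G i) := hxH
          rw [hc i, Subgroup.mem_bot] at hmem
          rw [Subgroup.mem_bot, hmem]
          exact map_one _
        haveI : Fintype I := Fintype.ofFinite I
        have hsurjψ : Function.Surjective ((QuotientGroup.mk' Khat).comp H.subtype) := by
          intro q
          obtain ⟨g, rfl⟩ := QuotientGroup.mk'_surjective Khat q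
          have hg' : g ∈ ((H : Set ((j : I) → G j)) * (Khat : Set ((j : I) → G j))) := by
            rw [← Subgroup.mul_normal H Khat, hsup, Subgroup.coe_top]
            trivial
          obtain ⟨h, hh, k, hk, rfl⟩ := hg'
          refine ⟨⟨h, hh⟩, ?_⟩
          show QuotientGroup.mk' Khat h = QuotientGroup.mk' Khat (h * k)
          rw [QuotientGroup.mk'_eq_mk']
          exact ⟨k, hk, rfl⟩
        have hinjψ : Function.Injective ((QuotientGroup.mk' Khat).comp H.subtype) := by
          rw [injective_iff_map_eq_one]
          rintro ⟨x, hx⟩ hx1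
          have hxm : x ∈ Khat := (QuotientGroup.eq_one_iff x).mp hx1
          have hxb : x ∈ H ⊓ Khat := ⟨hx, hxm⟩
          rw [hdisj, Subgroup.mem_bot] at hxb
          exact Subtype.ext hxb
        have hcardH : Nat.card H = Nat.card ((∀ j, G j) ⧸ Khat) :=
          Nat.card_congr (Equiv.ofBijective _ ⟨hinjψ, hsurjψ⟩)
        have hcardG : Nat.card (∀ j, G j) = Nat.card ((∀ j, G j) ⧸ Khat) * Nat.card Khat :=
          Subgroup.card_eq_card_quotient_mul_card_subgroup Khat
        have hinjsingle : Function.Injective (MonoidHom.mulSingle G i) := by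
          intro a b hab
          apply Pi.mulSingle_injective i
          simpa only [← MonoidHom.mulSingle_apply] using hab
        have hcardK : Nat.card Khat = Nat.card (melnikov (G i)) :=
          (Nat.card_congr ((Subgroup.equivMapOfInjective _ _ hinjsingle).toEquiv)).symm
        set r : (∀ j, G j) →* (∀ j : {j : I // j ≠ i}, G j.1) :=
          Pi.monoidHom (fun j => Pi.evalMonoidHom G j.1) with hr
        have hinjr : Function.Injective (r.comp H.subtype) := by
          rw [injective_iff_map_eq_one]
          rintro ⟨x, hx⟩ hx1
          have hxj : ∀ j : I, j ≠ i → x j = 1 := by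
            intro j hj
            exact congrFun hx1 ⟨j, hj⟩
          have hxeq : x = MonoidHom.mulSingle G i (x i) := by
            funext j
            rcases eq_or_ne j i with rfl | hj
            · simp
            · simp [MonoidHom.mulSingle_apply, Pi.mulSingle, Function.update_of_ne hj, hxj j hj]
          have hmem : x i ∈ H.comap (MonoidHom.mulSingle G i) := by
            rw [Subgroup.mem_comap, ← hxeq]; exact hx
          rw [hc i, Subgroup.mem_bot] at hmem
          apply Subtype.ext
          show x = 1
          calc x = MonoidHom.mulSingle G i (x i) := hxeq
            _ = 1 := by rw [hmem]; exact map_one _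
        have hHle : Nat.card H ≤ Nat.card (∀ j : {j : I // j ≠ i}, G j.1) :=
          Nat.card_le_card_of_injective _ hinjr
        have hsubty : Nat.card (∀ j : {j : I // j ≠ i}, G j.1) =
            ∏ j ∈ Finset.univ.erase i, Nat.card (G j) := by
          rw [Nat.card_pi]
          exact (Finset.prod_subtype (Finset.univ.erase i)
            (fun j => by simp [Finset.mem_erase]) (fun j => Nat.card (G j))).symm
        have htot : Nat.card (∀ j, G j) =
            Nat.card (G i) * ∏ j ∈ Finset.univ.erase i, Nat.card (G j) := by
          rw [Nat.card_pi, ← Finset.mul_prod_erase Finset.univ _ (Finset.mem_univ i)]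
        set P := ∏ j ∈ Finset.univ.erase i, Nat.card (G j) with hP
        have hPpos : 0 < P := Finset.prod_pos fun j _ => Nat.card_pos
        have hineq : Nat.card (G i) * P ≤ Nat.card (melnikov (G i)) * P := by
          have e1 : Nat.card (G i) * P = Nat.card ((∀ j, G j) ⧸ Khat) * Nat.card Khat := by
            rw [← htot]; exact hcardG
          rw [e1, ← hcardH, hcardK, mul_comm (Nat.card H)]
          exact Nat.mul_le_mul_left _ (hsubty ▸ hHle)
        have hle2 : Nat.card (G i) ≤ Nat.card (melnikov (G i)) :=
          Nat.le_of_mul_le_mul_right hineq hPpos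
        have htopK : melnikov (G i) = ⊤ :=
          Subgroup.eq_top_of_card_eq _ (le_antisymm (Subgroup.card_le_card_group (melnikov (G i))) hle2)
        haveI : Nontrivial (G i) := by
          rcases subsingleton_or_nontrivial (G i) with hs | hn
          · exact absurd (Subsingleton.elim (melnikov (G i)) ⊥) hi
          · exact hn
        obtain ⟨Nm, hNm⟩ := exists_isMaximalNormal (G i)
        exact hNm.2.1 (top_le_iff.mp (htopK ▸ melnikov_le_of_max hNm))
    · -- some H ⊓ (factor i) is nontrivial
      push_neg at hc
      obtain ⟨i, hi⟩ := hc
      set K := H.comap (MonoidHom.mulSingle G i) with hK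
      have hKn : K.Normal := by
        constructor
        intro x hx g
        obtain ⟨h, hh, hhi⟩ := Subgroup.mem_map.mp ((h2 i).symm ▸ Subgroup.mem_top g)
        have heq : MonoidHom.mulSingle G i (g * x * g⁻¹) =
            h * MonoidHom.mulSingle G i x * h⁻¹ := by
          funext j
          rcases eq_or_ne j i with hj | hj
          · subst hj
            simp only [MonoidHom.mulSingle_apply, Pi.mulSingle_eq_same, Pi.mul_apply,
              Pi.inv_apply]
            rw [show h j = g from hhi]
          · simp [MonoidHom.mulSingle_apply, Pi.mulSingle, Function.update_of_ne hj]
        rw [hK, Subgroup.mem_comap, heq]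
        exact H.mul_mem (H.mul_mem hh hx) (H.inv_mem hh)
      have hsup := key i K hKn hi
      have hle : K.map (MonoidHom.mulSingle G i) ≤ H := by
        rintro x hx
        obtain ⟨k, hk, rfl⟩ := Subgroup.mem_map.mp hx
        exact hk
      rw [sup_eq_left.mpr hle] at hsup
      exact hsup


end Main

/-- **Proposition (filling a direct product).**
Let `(G_i)_{i∈I}` be a finite family of finite groups, `G = ∏ᵢ G_i`, and `H ≤ G`.
If `H·M(G) = G` and `πᵢ(H) = G_i` for all `i`, then `H = G`. -/
theorem eq_top_of_sup_melnikov_and_surj_proj {I : Type*} [Finite I] (G : I → Type*)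
    [∀ i, Group (G i)] [∀ i, Finite (G i)] (H : Subgroup (∀ i, G i))
    (h1 : H ⊔ melnikov (∀ i, G i) = ⊤)
    (h2 : ∀ i, H.map (Pi.evalMonoidHom G i) = ⊤) :
    H = ⊤ :=
  aux_melnikov_fill (Nat.card (∀ i, G i)) G H le_rfl h1 h2
end

section
/- Let n ≥ 3 and let Hₙ = V ⋊ Sₙ be the hyperoctahedral group, where V = (𝔽₂)ⁿ and Sₙ acts by permuting coordinates. Let V_{n−1} = {x ∈ V : x₁ + ⋯ + xₙ = 0} and let N = V_{n−1} ⋊ Sₙ ≤ Hₙ. Then M(Hₙ) = M(N) = V_{n−1} ⋊ Aₙ, i.e. the Melnikov subgroups of both Hₙ and N equal the subgroup {(x,τ) : x₁ + ⋯ + xₙ = 0 and τ is an even permutation}. -/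
open Equiv

open scoped Classical

noncomputable section

/-- The vector part `V = (𝔽₂)ⁿ` of the hyperoctahedral group (written
multiplicatively so that it can serve as the kernel of a semidirect product). -/
abbrev Vn (n : ℕ) : Type := Fin n → Multiplicative (ZMod 2)

/-- The permutation action of `Sₙ` on `V = (𝔽₂)ⁿ` by permuting coordinates, as a
homomorphism `Sₙ →* Aut(V)`. -/
def permHom (n : ℕ) : Perm (Fin n) →* MulAut (Vn n) where
  toFun σ := MulEquiv.arrowCongr σ (MulEquiv.refl (Multiplicative (ZMod 2)))
  map_one' := by
    ext x i
    rfl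
  map_mul' σ τ := by
    ext x i
    rfl

/-- The hyperoctahedral group `Hₙ = V ⋊ Sₙ`, `V = (𝔽₂)ⁿ`, with `Sₙ` permuting
coordinates; elements are written `⟨x, τ⟩` with `x ∈ V`, `τ ∈ Sₙ`. -/
abbrev Hyp (n : ℕ) : Type := SemidirectProduct (Vn n) (Perm (Fin n)) (permHom n)

/-- The total sign `χ : Hₙ → {±1}`, `χ(x,τ) = (−1)^{x₁+⋯+xₙ}`, realized as a
homomorphism to `Multiplicative (ZMod 2) ≅ {±1}`. -/
def tsign (n : ℕ) : Hyp n →* Multiplicative (ZMod 2) where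
  toFun g := Multiplicative.ofAdd (∑ i, Multiplicative.toAdd (g.left i))
  map_one' := by
    simp
  map_mul' g h := by
    simp only [SemidirectProduct.mul_left]
    rw [← ofAdd_add]
    congr 1
    have : ∑ i, Multiplicative.toAdd ((permHom n g.right h.left) i) =
        ∑ i, Multiplicative.toAdd (h.left i) := by
      exact Equiv.sum_comp (g.right.symm)
        (fun i => Multiplicative.toAdd (h.left i))
    simp [Pi.mul_apply, Finset.sum_add_distrib, this]

/-- The subgroup `V_{n−1} ⋊ Sₙ = ker χ` of `Hₙ` (sum of signs zero). -/
def kerSign (n : ℕ) : Subgroup (Hyp n) := (tsign n).ker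

/-- The subgroup `V_{n−1} ⋊ Aₙ` of `Hₙ`: total sign `0` and even permutation part. -/
def Kn (n : ℕ) : Subgroup (Hyp n) :=
  (tsign n).ker ⊓ (alternatingGroup (Fin n)).comap SemidirectProduct.rightHom

end

namespace MelnikovAux

lemma isMaximalNormal_of_index_two {G : Type*} [Group G] {M : Subgroup G} (hM : M.Normal)
    (h : M.index = 2) : IsMaximalNormal M := by
  refine ⟨hM, ?_, ?_⟩
  · rintro rfl
    rw [Subgroup.index_top] at h
    omega
  · intro N' _ hlt
    have hmul := Subgroup.relIndex_mul_index hlt.le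
    rw [h] at hmul
    have hdvd : N'.index ∣ 2 := Dvd.intro_left _ hmul
    rcases (Nat.prime_two.eq_one_or_self_of_dvd N'.index hdvd) with h1 | h2
    · exact Subgroup.index_eq_one.mp h1
    · exfalso
      rw [h2] at hmul
      have h3 : M.relIndex N' = 1 := by omega
      exact hlt.not_ge (Subgroup.relIndex_eq_one.mp h3)

lemma isMaximalNormal_map {G P : Type*} [Group G] [Group P] (π : G →* P)
    (hπ : Function.Surjective π) {M : Subgroup G} (hM : IsMaximalNormal M)
    (hker : π.ker ≤ M) : IsMaximalNormal (M.map π) := by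
  obtain ⟨hnorm, hne, hmax⟩ := hM
  have hcm : (M.map π).comap π = M := Subgroup.comap_map_eq_self hker
  refine ⟨hnorm.map π hπ, ?_, ?_⟩
  · intro htop
    apply hne
    rw [← hcm, htop, Subgroup.comap_top]
  · intro K' hK' hlt
    have h1 : M < K'.comap π := by
      refine lt_of_le_of_ne (hcm ▸ Subgroup.comap_mono hlt.le) ?_
      intro heq
      apply hlt.ne
      rw [heq, Subgroup.map_comap_eq_self_of_surjective hπ]
    have h2 := hmax (K'.comap π) (hK'.comap π) h1
    rw [← Subgroup.map_comap_eq_self_of_surjective hπ K', h2,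
      Subgroup.map_top_of_surjective π hπ]

lemma three_cycle_le {α : Type*} [Fintype α] [DecidableEq α] {K : Subgroup (Perm α)}
    (hK : K.Normal) {c : Perm α} (hc : c.IsThreeCycle) (hcK : c ∈ K) :
    alternatingGroup α ≤ K := by
  rw [← Equiv.Perm.closure_three_cycles_eq_alternating, Subgroup.closure_le]
  intro d hd
  obtain ⟨z, hz⟩ := isConj_iff.mp (Equiv.Perm.isConj_iff_cycleType_eq.mpr (hc.trans hd.symm))
  exact hz ▸ hK.conj_mem c hcK z

set_option maxRecDepth 10000 in
lemma alternating_le_of_isMaximalNormal {n : ℕ} (hn : 3 ≤ n) {K : Subgroup (Perm (Fin n))}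
    (hK : IsMaximalNormal K) : alternatingGroup (Fin n) ≤ K := by
  by_cases hAK : alternatingGroup (Fin n) ≤ K
  · exact hAK
  exfalso
  obtain ⟨hnorm, hne, hmax⟩ := hK
  obtain ⟨i0, i1, h01⟩ : ∃ x y : Fin n, x ≠ y :=
    ⟨⟨0, by omega⟩, ⟨1, by omega⟩, by simp [Fin.ext_iff]⟩
  have hAtop : alternatingGroup (Fin n) ≠ ⊤ := by
    intro h
    have hm : Equiv.swap i0 i1 ∈ alternatingGroup (Fin n) := h ▸ Subgroup.mem_top _
    rw [Equiv.Perm.mem_alternatingGroup, Equiv.Perm.sign_swap h01] at hm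
    exact (by decide : (-1 : ℤˣ) ≠ 1) hm
  haveI := hnorm
  have hsup : K ⊔ alternatingGroup (Fin n) = ⊤ := by
    refine hmax _ (Subgroup.sup_normal K _) (lt_of_le_of_ne le_sup_left ?_)
    intro h
    exact hAK (le_sup_right.trans h.ge)
  have hKA : ¬ K ≤ alternatingGroup (Fin n) := by
    intro h
    exact hAtop (le_antisymm le_sup_right (sup_le h le_rfl) ▸ hsup)
  obtain ⟨w, hwK, hwA⟩ := SetLike.not_le_iff_exists.mp hKA
  have hw1 : w ≠ 1 := fun h => hwA (h ▸ (alternatingGroup (Fin n)).one_mem)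
  have finish3 : ∀ c : Perm (Fin n), c.IsThreeCycle → c ∈ K → False := fun c h1 h2 =>
    hAK (three_cycle_le hnorm h1 h2)
  have finishSwap : ∀ x y : Fin n, x ≠ y → Equiv.swap x y ∈ K → False := by
    intro x y hxy hm
    apply hne
    rw [eq_top_iff, ← Equiv.Perm.closure_isSwap, Subgroup.closure_le]
    rintro s ⟨u, v, huv, rfl⟩
    obtain ⟨z, hz⟩ := isConj_iff.mp (Equiv.Perm.isConj_swap hxy huv)
    exact hz ▸ hnorm.conj_mem _ hm z
  by_cases h5 : 5 ≤ n
  · -- generic case : extract a three-cycle from w by commutators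
    obtain ⟨a, ha⟩ : ∃ a, w a ≠ a := by
      by_contra h
      push_neg at h
      exact hw1 (Equiv.ext h)
    set b := w a with hb
    obtain ⟨c, hca, hcb⟩ : ∃ c, c ≠ a ∧ c ≠ b := by
      by_contra h
      push_neg at h
      have hsub : (Finset.univ : Finset (Fin n)) ⊆ {a, b} := by
        intro x _
        rcases eq_or_ne x a with rfl | hx
        · simp
        · simp [h x hx]
      have hle := Finset.card_le_card hsub
      have h2 : ({a, b} : Finset (Fin n)).card ≤ 2 :=
        (Finset.card_insert_le _ _).trans (by simp)
      simp only [Finset.card_univ, Fintype.card_fin] at hle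
      omega
    set d := w c with hd
    have hdb : d ≠ b := fun h => hca (w.injective h)
    have hba : b ≠ a := ha
    have hgK : Equiv.swap a c * Equiv.swap b d ∈ K := by
      have h1 : Equiv.swap b d = w * Equiv.swap a c * w⁻¹ := by
        rw [hb, hd]
        exact Equiv.swap_apply_apply w a c
      have h2 := hnorm.conj_mem _ hwK (Equiv.swap a c)
      have h3 : Equiv.swap a c * w * (Equiv.swap a c)⁻¹ * w⁻¹ ∈ K :=
        K.mul_mem h2 (K.inv_mem hwK)
      have h4 : Equiv.swap a c * Equiv.swap b d
          = Equiv.swap a c * w * (Equiv.swap a c)⁻¹ * w⁻¹ := by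
        rw [h1, Equiv.swap_inv]
        simp [mul_assoc]
      rw [h4]
      exact h3
    rcases eq_or_ne d a with hda' | hda
    · rw [hda'] at hgK
      refine finish3 _ ?_ hgK
      rw [Equiv.swap_comm b a]
      exact Equiv.Perm.isThreeCycle_swap_mul_swap_same hca.symm hba.symm hcb
    rcases eq_or_ne d c with hdc' | hdc
    · rw [hdc'] at hgK
      refine finish3 _ ?_ hgK
      rw [Equiv.swap_comm a c, Equiv.swap_comm b c]
      exact Equiv.Perm.isThreeCycle_swap_mul_swap_same hca hcb hba.symm
    · -- disjoint case, need a fifth point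
      obtain ⟨e, hea, heb, hec, hed⟩ : ∃ e : Fin n, e ≠ a ∧ e ≠ b ∧ e ≠ c ∧ e ≠ d := by
        by_contra h
        push_neg at h
        have hsub : (Finset.univ : Finset (Fin n)) ⊆ {a, b, c, d} := by
          intro x _
          rcases eq_or_ne x a with rfl | h1; · simp
          rcases eq_or_ne x b with rfl | h2; · simp
          rcases eq_or_ne x c with rfl | h3; · simp
          simp [h x h1 h2 h3]
        have hle := Finset.card_le_card hsub
        have h2 : ({a, b, c, d} : Finset (Fin n)).card ≤ 4 := by
          refine (Finset.card_insert_le _ _).trans (Nat.succ_le_succ ?_)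
          refine (Finset.card_insert_le _ _).trans (Nat.succ_le_succ ?_)
          exact (Finset.card_insert_le _ _).trans (by simp)
        simp only [Finset.card_univ, Fintype.card_fin] at hle
        omega
      set g := Equiv.swap a c * Equiv.swap b d with hg
      have hgc : g c = a := by
        have h1 : Equiv.swap b d c = c := Equiv.swap_apply_of_ne_of_ne hcb hdc.symm
        simp [hg, Equiv.Perm.mul_apply, h1]
      have hge : g e = e := by
        have h1 : Equiv.swap b d e = e := Equiv.swap_apply_of_ne_of_ne heb hed
        simp [hg, Equiv.Perm.mul_apply, h1, Equiv.swap_apply_of_ne_of_ne hea hec]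
      have hhK : Equiv.swap c e * Equiv.swap a e ∈ K := by
        have h1 : Equiv.swap a e = g * Equiv.swap c e * g⁻¹ := by
          have := Equiv.swap_apply_apply g c e
          rw [hgc, hge] at this
          exact this
        have h2 := hnorm.conj_mem _ hgK (Equiv.swap c e)
        have h3 : Equiv.swap c e * g * (Equiv.swap c e)⁻¹ * g⁻¹ ∈ K :=
          K.mul_mem h2 (K.inv_mem hgK)
        have h4 : Equiv.swap c e * Equiv.swap a e
            = Equiv.swap c e * g * (Equiv.swap c e)⁻¹ * g⁻¹ := by
          rw [h1, Equiv.swap_inv]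
          simp [mul_assoc]
        rw [h4]
        exact h3
      refine finish3 _ ?_ hhK
      rw [Equiv.swap_comm c e, Equiv.swap_comm a e]
      exact Equiv.Perm.isThreeCycle_swap_mul_swap_same hec hea hca
  · -- n = 3 or n = 4
    push_neg at h5
    interval_cases n
    · -- n = 3
      have class3 : ∀ v : Perm (Fin 3), v = 1 ∨ (∃ z, z * v * z⁻¹ = Equiv.swap 0 1) ∨
          (∃ z, z * v * z⁻¹ = Equiv.swap 0 1 * Equiv.swap 0 2) := by decide
      rcases class3 w with h | ⟨z, hz⟩ | ⟨z, hz⟩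
      · exact hw1 h
      · exact finishSwap 0 1 (by decide) (hz ▸ hnorm.conj_mem _ hwK z)
      · exact finish3 _ (Equiv.Perm.isThreeCycle_swap_mul_swap_same (by decide) (by decide)
          (by decide)) (hz ▸ hnorm.conj_mem _ hwK z)
    · -- n = 4
      have class4 : ∀ v : Perm (Fin 4), v = 1 ∨ (∃ z, z * v * z⁻¹ = Equiv.swap 0 1) ∨
          (∃ z, z * v * z⁻¹ = Equiv.swap 0 1 * Equiv.swap 0 2) ∨
          (∃ z, z * v * z⁻¹ = Equiv.swap 0 1 * Equiv.swap 2 3) ∨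
          (∃ z, z * v * z⁻¹ = Equiv.swap 0 1 * Equiv.swap 1 2 * Equiv.swap 2 3) := by decide
      rcases class4 w with h | ⟨z, hz⟩ | ⟨z, hz⟩ | ⟨z, hz⟩ | ⟨z, hz⟩
      · exact hw1 h
      · exact finishSwap 0 1 (by decide) (hz ▸ hnorm.conj_mem _ hwK z)
      · exact finish3 _ (Equiv.Perm.isThreeCycle_swap_mul_swap_same (by decide) (by decide)
          (by decide)) (hz ▸ hnorm.conj_mem _ hwK z)
      · -- double transposition class : impossible since w is odd
        exfalso
        have hv4 : Equiv.swap (0:Fin 4) 1 * Equiv.swap 2 3 ∈ alternatingGroup (Fin 4) := by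
          rw [Equiv.Perm.mem_alternatingGroup]
          simp [Equiv.Perm.sign_swap, (by decide : (0:Fin 4) ≠ 1), (by decide : (2:Fin 4) ≠ 3)]
        have hzw : z * w * z⁻¹ ∈ alternatingGroup (Fin 4) := hz ▸ hv4
        have : w ∈ alternatingGroup (Fin 4) := by
          have h2 := (alternatingGroup.normal (α := Fin 4)).conj_mem _ hzw z⁻¹
          simpa [mul_assoc] using h2
        exact hwA this
      · -- 4-cycle class
        have hc4 : Equiv.swap (0:Fin 4) 1 * Equiv.swap 1 2 * Equiv.swap 2 3 ∈ K :=
          hz ▸ hnorm.conj_mem _ hwK z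
        have hc4' : Equiv.swap (2:Fin 4) 3 * (Equiv.swap 0 1 * Equiv.swap 1 2 * Equiv.swap 2 3) *
            (Equiv.swap (2:Fin 4) 3)⁻¹ ∈ K := hnorm.conj_mem _ hc4 _
        have hprod := K.mul_mem hc4 hc4'
        have heq : (Equiv.swap (0:Fin 4) 1 * Equiv.swap 1 2 * Equiv.swap 2 3) *
            (Equiv.swap (2:Fin 4) 3 * (Equiv.swap 0 1 * Equiv.swap 1 2 * Equiv.swap 2 3) *
            (Equiv.swap (2:Fin 4) 3)⁻¹) = Equiv.swap 0 1 * Equiv.swap 0 2 := by decide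
        rw [heq] at hprod
        exact finish3 _ (Equiv.Perm.isThreeCycle_swap_mul_swap_same (by decide) (by decide)
          (by decide)) hprod

lemma key_lemma {n : ℕ} (hn : 3 ≤ n) {G : Type*} [Group G] (π : G →* Perm (Fin n))
    (hπ : Function.Surjective π)
    (hab : ∀ a b : G, a ∈ π.ker → b ∈ π.ker → a * b = b * a)
    {M : Subgroup G} (hM : IsMaximalNormal M) :
    (alternatingGroup (Fin n)).comap π ⊓ commutator G ≤ M := by
  obtain ⟨hnorm, hne, hmax⟩ := hM
  haveI := hnorm
  by_cases hker : π.ker ≤ M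
  · have h1 := alternating_le_of_isMaximalNormal hn
      (isMaximalNormal_map π hπ ⟨hnorm, hne, hmax⟩ hker)
    have h2 : (alternatingGroup (Fin n)).comap π ≤ (M.map π).comap π := Subgroup.comap_mono h1
    rw [Subgroup.comap_map_eq_self hker] at h2
    exact inf_le_left.trans h2
  · have hsup : M ⊔ π.ker = ⊤ := by
      refine hmax _ (Subgroup.sup_normal M π.ker) (lt_of_le_of_ne le_sup_left ?_)
      intro h
      exact hker (le_sup_right.trans h.ge)
    have hQsurj : Subgroup.map (QuotientGroup.mk' M) π.ker = ⊤ := by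
      have h1 : Subgroup.map (QuotientGroup.mk' M) (M ⊔ π.ker) = ⊤ := by
        rw [hsup, Subgroup.map_top_of_surjective _ (QuotientGroup.mk'_surjective M)]
      rw [Subgroup.map_sup] at h1
      have h2 : Subgroup.map (QuotientGroup.mk' M) M = ⊥ := by
        rw [eq_bot_iff]
        rintro q ⟨x, hx, rfl⟩
        simpa [Subgroup.mem_bot] using (QuotientGroup.eq_one_iff x).mpr hx
      rwa [h2, bot_sup_eq] at h1
    have hcomm : ∀ q r : G ⧸ M, q * r = r * q := by
      intro q r
      have hq : q ∈ Subgroup.map (QuotientGroup.mk' M) π.ker := hQsurj ▸ Subgroup.mem_top q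
      have hr : r ∈ Subgroup.map (QuotientGroup.mk' M) π.ker := hQsurj ▸ Subgroup.mem_top r
      obtain ⟨a, haK, rfl⟩ := hq
      obtain ⟨b, hbK, rfl⟩ := hr
      rw [← map_mul, ← map_mul, hab a b haK hbK]
    letI : CommGroup (G ⧸ M) := { (inferInstance : Group (G ⧸ M)) with mul_comm := hcomm }
    have h3 : commutator G ≤ (QuotientGroup.mk' M).ker := Abelianization.commutator_subset_ker _
    rw [QuotientGroup.ker_mk'] at h3
    exact inf_le_right.trans h3

section VnLemmas

open SemidirectProduct

variable (n : ℕ)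

/-- The coordinate-sum homomorphism on `Vn`. -/
def sumHom : Vn n →* Multiplicative (ZMod 2) where
  toFun x := Multiplicative.ofAdd (∑ i, Multiplicative.toAdd (x i))
  map_one' := by simp
  map_mul' x y := by
    rw [← ofAdd_add]
    congr 1
    simp [Pi.mul_apply, Finset.sum_add_distrib]

lemma tsign_def (g : Hyp n) : tsign n g = sumHom n g.left := rfl

/-- An `𝔽₂` vector supported on the two indices `i, j`. -/
def pairV (i j : Fin n) : Vn n :=
  fun m => if m = i ∨ m = j then Multiplicative.ofAdd 1 else 1

lemma pairV_mem_ker {i j : Fin n} (hij : i ≠ j) : pairV n i j ∈ (sumHom n).ker := by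
  rw [MonoidHom.mem_ker]
  show Multiplicative.ofAdd (∑ m, Multiplicative.toAdd (pairV n i j m)) = 1
  have h1 : ∀ m : Fin n, Multiplicative.toAdd (pairV n i j m)
      = (if m = i then (1 : ZMod 2) else 0) + (if m = j then (1 : ZMod 2) else 0) := by
    intro m
    rcases eq_or_ne m i with rfl | hmi
    · simp [pairV, hij]
    rcases eq_or_ne m j with rfl | hmj
    · simp [pairV, hmi]
    · simp [pairV, hmi, hmj]
  rw [Finset.sum_congr rfl fun m _ => h1 m, Finset.sum_add_distrib,
    Finset.sum_ite_eq' Finset.univ i (fun _ => (1 : ZMod 2)),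
    Finset.sum_ite_eq' Finset.univ j (fun _ => (1 : ZMod 2))]
  simp only [Finset.mem_univ, if_true]
  decide

lemma pairV_sq (i j : Fin n) : pairV n i j * pairV n i j = 1 := by
  funext m
  by_cases h : m = i ∨ m = j
  · show pairV n i j m * pairV n i j m = 1
    simp only [pairV, h, if_true]
    decide
  · show pairV n i j m * pairV n i j m = 1
    simp only [pairV, h, if_false]
    decide

lemma kerSum_aux (S : Set (Vn n)) (hS : ∀ i j : Fin n, i ≠ j → pairV n i j ∈ S) (N : ℕ) :
    ∀ x : Vn n, x ∈ (sumHom n).ker →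
      (Finset.univ.filter fun m => x m ≠ 1).card ≤ N → x ∈ Subgroup.closure S := by
  induction N with
  | zero =>
    intro x hx hcard
    have hx1 : x = 1 := by
      funext m
      by_contra hm
      rw [Pi.one_apply] at hm
      have hmem : m ∈ Finset.univ.filter fun m => x m ≠ 1 := by simp [hm]
      rw [Finset.card_eq_zero.mp (Nat.le_zero.mp hcard)] at hmem
      exact absurd hmem (Finset.notMem_empty m)
    rw [hx1]
    exact Subgroup.one_mem _
  | succ N ih =>
    intro x hx hcard
    by_cases h0 : (Finset.univ.filter fun m => x m ≠ 1).card = 0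
    · exact ih x hx (by omega)
    obtain ⟨i, hi⟩ := Finset.card_pos.mp (Nat.pos_of_ne_zero h0)
    have hxi : x i ≠ 1 := (Finset.mem_filter.mp hi).2
    obtain ⟨j, hj, hji⟩ : ∃ j ∈ Finset.univ.filter (fun m => x m ≠ 1), j ≠ i := by
      by_contra h
      push_neg at h
      have hsum : ∑ m, Multiplicative.toAdd (x m)
          = ∑ m ∈ Finset.univ.filter (fun m => x m ≠ 1), Multiplicative.toAdd (x m) := by
        symm
        apply Finset.sum_filter_of_ne
        intro m _ hm hm1
        exact hm (by rw [hm1]; rfl)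
      have hfil : Finset.univ.filter (fun m => x m ≠ 1) = {i} :=
        Finset.eq_singleton_iff_unique_mem.mpr ⟨hi, fun j hj => h j hj⟩
      rw [hfil, Finset.sum_singleton] at hsum
      have hker : Multiplicative.ofAdd (∑ m, Multiplicative.toAdd (x m)) = 1 := hx
      rw [hsum] at hker
      apply hxi
      have h2 : Multiplicative.toAdd (x i) = 0 := by simpa using hker
      simpa using congrArg Multiplicative.ofAdd h2
    have hxj : x j ≠ 1 := (Finset.mem_filter.mp hj).2
    have hval : ∀ m : Fin n, x m ≠ 1 → x m = Multiplicative.ofAdd 1 := by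
      intro m hm
      have h2 : ∀ z : Multiplicative (ZMod 2), z = 1 ∨ z = Multiplicative.ofAdd 1 := by decide
      rcases h2 (x m) with h | h
      · exact absurd h hm
      · exact h
    set x' := x * pairV n i j with hx'
    have hij : i ≠ j := Ne.symm hji
    have hx'ker : x' ∈ (sumHom n).ker := (sumHom n).ker.mul_mem hx (pairV_mem_ker n hij)
    have hfilter' : (Finset.univ.filter fun m => x' m ≠ 1)
        ⊆ (Finset.univ.filter fun m => x m ≠ 1).erase i := by
      intro m hm
      rw [Finset.mem_filter] at hm
      rw [Finset.mem_erase]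
      constructor
      · rintro rfl
        apply hm.2
        show x m * pairV n m j m = 1
        rw [hval m hxi]
        simp only [pairV, true_or, if_true]
        decide
      · rw [Finset.mem_filter]
        refine ⟨Finset.mem_univ m, fun hxm => hm.2 ?_⟩
        have hmi : m ≠ i := fun h => hxi (h ▸ hxm)
        have hmj : m ≠ j := fun h => hxj (h ▸ hxm)
        show x m * pairV n i j m = 1
        rw [hxm, one_mul]
        simp [pairV, hmi, hmj]
    have hcard' : (Finset.univ.filter fun m => x' m ≠ 1).card ≤ N := by
      have h1 := Finset.card_le_card hfilter'
      have h2 := Finset.card_erase_of_mem hi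
      omega
    have hx'cl := ih x' hx'ker hcard'
    have hxeq : x = x' * pairV n i j := by
      rw [hx', mul_assoc, pairV_sq, mul_one]
    rw [hxeq]
    exact Subgroup.mul_mem _ hx'cl (Subgroup.subset_closure (hS i j hij))

end VnLemmas

section NSide

open SemidirectProduct

open scoped commutatorElement

variable (n : ℕ)

lemma exists_third (hn : 3 ≤ n) (a b : Fin n) : ∃ c : Fin n, c ≠ a ∧ c ≠ b := by
  by_contra h
  push_neg at h
  have hsub : (Finset.univ : Finset (Fin n)) ⊆ {a, b} := by
    intro x _
    rcases eq_or_ne x a with rfl | hx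
    · simp
    · simp [h x hx]
  have hle := Finset.card_le_card hsub
  have h2 : ({a, b} : Finset (Fin n)).card ≤ 2 :=
    (Finset.card_insert_le _ _).trans (by simp)
  simp only [Finset.card_univ, Fintype.card_fin] at hle
  omega

lemma pairV_inv (i j : Fin n) : (pairV n i j)⁻¹ = pairV n i j := by
  have h : ∀ z : Multiplicative (ZMod 2), z⁻¹ = z := by decide
  funext m
  exact h _

lemma permHom_apply (σ : Perm (Fin n)) (x : Vn n) (m : Fin n) :
    permHom n σ x m = x (σ.symm m) := rfl

lemma permHom_swap_pairV {i j k : Fin n} (hij : i ≠ j) (hik : i ≠ k) (hjk : j ≠ k) :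
    permHom n (Equiv.swap i j) (pairV n i k) = pairV n j k := by
  funext m
  rw [permHom_apply, Equiv.symm_swap]
  rcases eq_or_ne m i with rfl | hmi
  · rw [Equiv.swap_apply_left]
    simp [pairV, Ne.symm hij, hjk, hij, hik]
  rcases eq_or_ne m j with rfl | hmj
  · rw [Equiv.swap_apply_right]
    simp [pairV]
  · rw [Equiv.swap_apply_of_ne_of_ne hmi hmj]
    rcases eq_or_ne m k with rfl | hmk
    · simp [pairV]
    · simp [pairV, hmi, hmj, hmk]

lemma pairV_mul_pairV {i j k : Fin n} (hij : i ≠ j) (hik : i ≠ k) (hjk : j ≠ k) :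
    pairV n i k * pairV n j k = pairV n i j := by
  funext m
  show pairV n i k m * pairV n j k m = pairV n i j m
  rcases eq_or_ne m i with rfl | hmi
  · simp [pairV, hij, hik]
  rcases eq_or_ne m j with rfl | hmj
  · simp [pairV, Ne.symm hij, hjk]
  rcases eq_or_ne m k with rfl | hmk
  · simp only [pairV, Ne.symm hik, Ne.symm hjk, or_self, if_false, or_true, if_true]
    decide
  · simp [pairV, hmi, hmj, hmk]

lemma tsign_inr (σ : Perm (Fin n)) : tsign n (inr σ) = 1 := by
  rw [tsign_def, left_inr, map_one]

lemma inr_mem_kerSign (σ : Perm (Fin n)) : (inr σ : Hyp n) ∈ kerSign n :=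
  tsign_inr n σ

def inrN : Perm (Fin n) →* ↥(kerSign n) where
  toFun σ := ⟨inr σ, inr_mem_kerSign n σ⟩
  map_one' := by
    apply Subtype.ext
    simp
  map_mul' σ τ := by
    apply Subtype.ext
    simp

def piN : ↥(kerSign n) →* Perm (Fin n) :=
  SemidirectProduct.rightHom.comp (kerSign n).subtype

lemma piN_surjective : Function.Surjective (piN n) := by
  intro σ
  refine ⟨inrN n σ, ?_⟩
  show SemidirectProduct.rightHom ((inrN n σ : ↥(kerSign n)) : Hyp n) = σ
  simp [inrN]

lemma ker_piN_comm : ∀ a b : ↥(kerSign n), a ∈ (piN n).ker → b ∈ (piN n).ker →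
    a * b = b * a := by
  intro a b ha hb
  have ha' : (a : Hyp n).right = 1 := ha
  have hb' : (b : Hyp n).right = 1 := hb
  apply Subtype.ext
  show (a : Hyp n) * b = (b : Hyp n) * a
  refine SemidirectProduct.ext ?_ ?_
  · rw [mul_left, mul_left, ha', hb', map_one]
    rw [MulAut.one_apply, MulAut.one_apply, mul_comm]
  · rw [mul_right, mul_right, ha', hb']

lemma ker_rightHom_comm : ∀ a b : Hyp n,
    a ∈ (SemidirectProduct.rightHom : Hyp n →* Perm (Fin n)).ker →
    b ∈ (SemidirectProduct.rightHom : Hyp n →* Perm (Fin n)).ker → a * b = b * a := by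
  intro a b ha hb
  rw [← range_inl_eq_ker_rightHom] at ha hb
  obtain ⟨x, rfl⟩ := ha
  obtain ⟨y, rfl⟩ := hb
  rw [← map_mul, ← map_mul, mul_comm]

lemma commutator_inl_inr (y : Vn n) (σ : Perm (Fin n)) :
    ⁅(inl y : Hyp n), (inr σ : Hyp n)⁆ = inl (y * permHom n σ y⁻¹) := by
  have h1 : ⁅(inl y : Hyp n), (inr σ : Hyp n)⁆
      = inl y * ((inr σ : Hyp n) * inl y⁻¹ * (inr σ⁻¹ : Hyp n)) := by
    rw [commutatorElement_def, map_inv, map_inv]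
    group
  rw [h1, ← inl_aut, ← map_mul]

def KnN : Subgroup ↥(kerSign n) := (alternatingGroup (Fin n)).comap (piN n)

lemma map_KnN : (KnN n).map (kerSign n).subtype = Kn n := by
  ext g
  simp only [Subgroup.mem_map, KnN, Subgroup.mem_comap, Kn, Subgroup.mem_inf]
  constructor
  · rintro ⟨⟨x, hx⟩, hmem, rfl⟩
    exact ⟨hx, hmem⟩
  · rintro ⟨h1, h2⟩
    exact ⟨⟨g, h1⟩, h2, rfl⟩

lemma inrN_threeCycle_mem_commutator {c : Perm (Fin n)} (hc : c.IsThreeCycle) :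
    inrN n c ∈ commutator ↥(kerSign n) := by
  have hconj : IsConj c c⁻¹ :=
    Equiv.Perm.isConj_iff_cycleType_eq.mpr (by rw [Equiv.Perm.cycleType_inv])
  obtain ⟨z, hz⟩ := isConj_iff.mp hconj
  have hc3 : c ^ 3 = 1 := by
    rw [← hc.orderOf]
    exact pow_orderOf_eq_one c
  have hcsq : c⁻¹ * c⁻¹ = c := by
    have hinv : c⁻¹ = c ^ 2 := inv_eq_of_mul_eq_one_right (by rw [← pow_succ', hc3])
    rw [hinv, ← pow_add, (by norm_num : 2 + 2 = 3 + 1), pow_add, hc3, one_mul, pow_one]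
  have hzc : ⁅z, c⁆ = c := by
    rw [commutatorElement_def, hz]
    exact hcsq
  have hmem : ⁅inrN n z, inrN n c⁆ ∈ commutator ↥(kerSign n) := by
    rw [commutator_def]
    exact Subgroup.commutator_mem_commutator (Subgroup.mem_top _) (Subgroup.mem_top _)
  rw [← map_commutatorElement, hzc] at hmem
  exact hmem

lemma inrN_alternating_mem_commutator {σ : Perm (Fin n)} (hσ : σ ∈ alternatingGroup (Fin n)) :
    inrN n σ ∈ commutator ↥(kerSign n) := by
  have h1 : alternatingGroup (Fin n) ≤ (commutator ↥(kerSign n)).comap (inrN n) := by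
    rw [← Equiv.Perm.closure_three_cycles_eq_alternating, Subgroup.closure_le]
    intro c hc
    exact inrN_threeCycle_mem_commutator n hc
  exact h1 hσ

lemma inl_pairV_mem (hn : 3 ≤ n) {i j : Fin n} (hij : i ≠ j) :
    (inl (pairV n i j) : Hyp n) ∈ (commutator ↥(kerSign n)).map (kerSign n).subtype := by
  obtain ⟨k, hki, hkj⟩ := exists_third n hn i j
  have hu : (inl (pairV n i k) : Hyp n) ∈ kerSign n := by
    show tsign n _ = 1
    rw [tsign_def, left_inl]
    exact pairV_mem_ker n (Ne.symm hki)
  rw [Subgroup.mem_map]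
  refine ⟨⁅(⟨inl (pairV n i k), hu⟩ : ↥(kerSign n)), inrN n (Equiv.swap i j)⁆, ?_, ?_⟩
  · rw [commutator_def]
    exact Subgroup.commutator_mem_commutator (Subgroup.mem_top _) (Subgroup.mem_top _)
  · rw [map_commutatorElement]
    show ⁅(inl (pairV n i k) : Hyp n), (inr (Equiv.swap i j) : Hyp n)⁆ = _
    rw [commutator_inl_inr, pairV_inv, permHom_swap_pairV n hij (Ne.symm hki) (Ne.symm hkj),
      pairV_mul_pairV n hij (Ne.symm hki) (Ne.symm hkj)]

lemma KnN_le_commutator (hn : 3 ≤ n) : KnN n ≤ commutator ↥(kerSign n) := by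
  intro g hg
  have hxker : (g : Hyp n).left ∈ (sumHom n).ker := by
    have h2 : tsign n (g : Hyp n) = 1 := g.2
    rwa [tsign_def] at h2
  have hul : (inl ((g : Hyp n).left) : Hyp n) ∈ kerSign n := by
    show tsign n _ = 1
    rw [tsign_def, left_inl]
    exact hxker
  have hτA : (g : Hyp n).right ∈ alternatingGroup (Fin n) := hg
  have hgdec : g = (⟨inl ((g : Hyp n).left), hul⟩ : ↥(kerSign n)) * inrN n ((g : Hyp n).right) := by
    apply Subtype.ext
    show (g : Hyp n) = inl ((g : Hyp n).left) * inr ((g : Hyp n).right)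
    exact (inl_left_mul_inr_right (g : Hyp n)).symm
  have hucl : (⟨inl ((g : Hyp n).left), hul⟩ : ↥(kerSign n)) ∈ commutator ↥(kerSign n) := by
    have hxcl : (g : Hyp n).left ∈
        Subgroup.closure {y : Vn n | ∃ i j, i ≠ j ∧ y = pairV n i j} :=
      kerSum_aux n {y : Vn n | ∃ i j, i ≠ j ∧ y = pairV n i j}
        (fun i j hij => ⟨i, j, hij, rfl⟩) _ _ hxker le_rfl
    have hle : Subgroup.closure {y : Vn n | ∃ i j, i ≠ j ∧ y = pairV n i j}
        ≤ ((commutator ↥(kerSign n)).map (kerSign n).subtype).comap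
          (inl : Vn n →* Hyp n) := by
      rw [Subgroup.closure_le]
      rintro y ⟨i, j, hij, rfl⟩
      exact inl_pairV_mem n hn hij
    obtain ⟨w, hw, hweq⟩ := hle hxcl
    have hwu : w = (⟨inl ((g : Hyp n).left), hul⟩ : ↥(kerSign n)) := Subtype.ext hweq
    rwa [hwu] at hw
  rw [hgdec]
  exact Subgroup.mul_mem _ hucl (inrN_alternating_mem_commutator n hτA)

lemma Kn_le_commutator (hn : 3 ≤ n) : Kn n ≤ commutator (Hyp n) := by
  rw [← map_KnN]
  refine le_trans (Subgroup.map_mono (KnN_le_commutator n hn)) ?_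
  rw [commutator_def, commutator_def, Subgroup.map_commutator]
  exact Subgroup.commutator_mono le_top le_top

lemma index_kerSign (hn : 3 ≤ n) : (kerSign n).index = 2 := by
  have hsurj : Function.Surjective (tsign n) := by
    intro u
    refine ⟨inl (fun m => if m = (⟨0, by omega⟩ : Fin n) then u else 1), ?_⟩
    rw [tsign_def, left_inl]
    show Multiplicative.ofAdd
      (∑ m, Multiplicative.toAdd (if m = (⟨0, by omega⟩ : Fin n) then u else 1)) = u
    have h1 : ∀ m : Fin n, Multiplicative.toAdd (if m = (⟨0, by omega⟩ : Fin n) then u else 1)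
        = if m = (⟨0, by omega⟩ : Fin n) then Multiplicative.toAdd u else 0 := by
      intro m
      split <;> simp
    rw [Finset.sum_congr rfl fun m _ => h1 m,
      Finset.sum_ite_eq' Finset.univ _ (fun _ => Multiplicative.toAdd u)]
    simp
  rw [kerSign, Subgroup.index_ker, MonoidHom.range_eq_top.mpr hsurj, Subgroup.card_top,
    Nat.card_eq_fintype_card, Fintype.card_multiplicative, ZMod.card]

lemma index_alternating (hn : 3 ≤ n) : (alternatingGroup (Fin n)).index = 2 := by
  haveI : Nontrivial (Fin n) := ⟨⟨⟨0, by omega⟩, ⟨1, by omega⟩, by simp [Fin.ext_iff]⟩⟩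
  rw [alternatingGroup_eq_sign_ker, Subgroup.index_ker,
    MonoidHom.range_eq_top.mpr (Equiv.Perm.sign_surjective (Fin n)), Subgroup.card_top,
    Nat.card_eq_fintype_card, Fintype.card_units_int]

lemma melnikov_Hyp (hn : 3 ≤ n) : melnikov (Hyp n) = Kn n := by
  apply le_antisymm
  · apply le_inf
    · exact sInf_le (isMaximalNormal_of_index_two (MonoidHom.normal_ker _) (index_kerSign n hn))
    · refine sInf_le (isMaximalNormal_of_index_two
        ((alternatingGroup.normal).comap SemidirectProduct.rightHom) ?_)
      rw [(alternatingGroup (Fin n)).index_comap_of_surjective rightHom_surjective]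
      exact index_alternating n hn
  · apply le_sInf
    intro M hM
    have hkey := key_lemma hn (SemidirectProduct.rightHom) rightHom_surjective
      (ker_rightHom_comm n) hM
    exact (le_inf inf_le_right (Kn_le_commutator n hn)).trans hkey

lemma melnikov_N (hn : 3 ≤ n) :
    (melnikov ↥(kerSign n)).map (kerSign n).subtype = Kn n := by
  have hmax : IsMaximalNormal (KnN n) := by
    refine isMaximalNormal_of_index_two ((alternatingGroup.normal).comap (piN n)) ?_
    rw [KnN, (alternatingGroup (Fin n)).index_comap_of_surjective (piN_surjective n)]
    exact index_alternating n hn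
  have h1 : melnikov ↥(kerSign n) ≤ KnN n := sInf_le hmax
  have h2 : KnN n ≤ melnikov ↥(kerSign n) := by
    apply le_sInf
    intro M hM
    have hkey := key_lemma hn (piN n) (piN_surjective n) (ker_piN_comm n) hM
    exact (le_inf le_rfl (KnN_le_commutator n hn)).trans hkey
  apply le_antisymm
  · rw [← map_KnN n]
    exact Subgroup.map_mono h1
  · rw [← map_KnN n]
    exact Subgroup.map_mono h2

end NSide

end MelnikovAux

/-- **Lemma (Melnikov subgroup of the hyperoctahedral group).**
For `n ≥ 3`, `M(Hₙ) = M(V_{n−1} ⋊ Sₙ) = V_{n−1} ⋊ Aₙ`, where `V_{n−1} ⋊ Sₙ = ker χ`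
is viewed both as a group in its own right (for its Melnikov subgroup, pushed forward
to `Hₙ`) and as a subgroup of `Hₙ`. -/
theorem melnikov_hyperoctahedral (n : ℕ) (hn : 3 ≤ n) :
    melnikov (Hyp n) = Kn n ∧
      Subgroup.map (kerSign n).subtype (melnikov ↥(kerSign n)) = Kn n :=
  ⟨MelnikovAux.melnikov_Hyp n hn, MelnikovAux.melnikov_N n hn⟩
end
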